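/- arXiv:1512.09343 — 4 statements merged into one kernel-verified Lean document; each statement's English description precedes it below -/
import Mathlib

section
/- Let K = ℚ(α) where α is the real fifth root of 18 (so α^5 = 18, and x^5 − 18 is irreducible over ℚ). Then each of the polynomials f₁(x) = x^5 − 18, f₂(x) = x^5 − 324, f₃(x) = x^5 − 24, f₄(x) = x^5 − 432, and f₅(x) = x^5 + 750x + 3750 is irreducible over ℚ and has a root in K. -/
open Polynomial

/-- A rational whose fifth power is an integer is an integer. -/
lemma exists_int_of_rat_pow5 {q : ℚ} {n : ℤ} (h : q ^ 5 = (n : ℚ)) :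
    ∃ m : ℤ, m ^ 5 = n := by
  have hden : q.den ^ 5 = 1 := by
    have := congrArg Rat.den h
    simpa [Rat.den_pow] using this
  have hden1 : q.den = 1 := (pow_eq_one_iff.mp hden).resolve_right (by norm_num)
  refine ⟨q.num, ?_⟩
  have hq : (q.num : ℚ) = q := Rat.coe_int_num_of_den_eq_one hden1
  have : ((q.num ^ 5 : ℤ) : ℚ) = ((n : ℤ) : ℚ) := by push_cast [hq]; exact h
  exact_mod_cast this

lemma no_rat_fifth_root {n : ℤ} (h0 : 0 < n) (h5 : n < 3125)
    (h1 : n ≠ 1) (h2 : n ≠ 32) (h3 : n ≠ 243) (h4 : n ≠ 1024)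
    (q : ℚ) : q ^ 5 ≠ (n : ℚ) := by
  intro h
  obtain ⟨m, hm⟩ := exists_int_of_rat_pow5 h
  have hm0 : 0 < m := by nlinarith [sq_nonneg m, sq_nonneg (m ^ 2), sq_nonneg (m ^ 2 + m), sq_nonneg (m ^ 2 - m)]
  have hm4 : m ≤ 4 := by
    by_contra hc
    push_neg at hc
    have : (5 : ℤ) ^ 5 ≤ m ^ 5 := pow_le_pow_left₀ (by norm_num) (by omega) 5
    omega
  interval_cases m <;> omega

lemma irr_pow5_sub (n : ℤ) (h0 : 0 < n) (h5 : n < 3125)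
    (h1 : n ≠ 1) (h2 : n ≠ 32) (h3 : n ≠ 243) (h4 : n ≠ 1024) :
    Irreducible (X ^ 5 - C (n : ℚ)) :=
  X_pow_sub_C_irreducible_of_prime (by norm_num)
    (no_rat_fifth_root h0 h5 h1 h2 h3 h4)

lemma irr_trinomial : Irreducible (X ^ 5 + 750 * X + 3750 : ℚ[X]) := by
  have hZ : Irreducible (X ^ 5 + 750 * X + 3750 : ℤ[X]) := by
    have hmonic : (X ^ 5 + 750 * X + 3750 : ℤ[X]).Monic := by
      monicity!
    have hdeg : (X ^ 5 + 750 * X + 3750 : ℤ[X]).natDegree = 5 := by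
      compute_degree!
    refine Polynomial.IsEisensteinAt.irreducible
      (𝓟 := Ideal.span {(3 : ℤ)}) ?_ ?_ hmonic.isPrimitive (by rw [hdeg]; norm_num)
    · constructor
      · rw [hmonic.leadingCoeff, Ideal.mem_span_singleton]
        norm_num
      · intro k hk
        rw [hdeg] at hk
        rw [Ideal.mem_span_singleton]
        interval_cases k <;>
          norm_num [coeff_X_pow, coeff_X]
      · rw [Ideal.span_singleton_pow, Ideal.mem_span_singleton]
        norm_num [coeff_X_pow, coeff_X]
    · exact Ideal.span_singleton_prime (by norm_num) |>.mpr (by norm_num)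
  have hprim : (X ^ 5 + 750 * X + 3750 : ℤ[X]).IsPrimitive := by
    have hmonic : (X ^ 5 + 750 * X + 3750 : ℤ[X]).Monic := by
      monicity!
    exact hmonic.isPrimitive
  have := (Polynomial.IsPrimitive.Int.irreducible_iff_irreducible_map_cast hprim).mp hZ
  have hmap : (map (Int.castRingHom ℚ) (X ^ 5 + 750 * X + 3750 : ℤ[X]))
      = (X ^ 5 + 750 * X + 3750 : ℚ[X]) := by
    simp [Polynomial.map_add, Polynomial.map_pow, Polynomial.map_mul, Polynomial.map_ofNat]
  rwa [hmap] at this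

/-- Let `K = ℚ(α) ⊆ ℝ` where `α = 18^(1/5)` is the real fifth root of `18`.
Then each of the five listed trinomials is irreducible over `ℚ` and has a root
in `K`. -/
theorem trinomials_of_Q_fifth_root_18 (α : ℝ) (hα : α = (18 : ℝ) ^ ((1 : ℝ) / 5)) :
    α ^ 5 = 18 ∧
    ∀ f ∈ [(X ^ 5 - 18 : ℚ[X]), X ^ 5 - 324, X ^ 5 - 24, X ^ 5 - 432,
        X ^ 5 + 750 * X + 3750],
      Irreducible f ∧
        ∃ γ ∈ IntermediateField.adjoin ℚ ({α} : Set ℝ), aeval γ f = 0 := by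
  have hα5 : α ^ 5 = 18 := by
    rw [hα, ← Real.rpow_natCast ((18:ℝ) ^ ((1:ℝ)/5)) 5, ← Real.rpow_mul (by norm_num)]
    norm_num
  refine ⟨hα5, ?_⟩
  set A := IntermediateField.adjoin ℚ ({α} : Set ℝ) with hA
  have hαA : α ∈ A := IntermediateField.subset_adjoin ℚ _ rfl
  have h3A : (3 : ℝ) ∈ A := by
    have := A.algebraMap_mem (3 : ℚ)
    simpa using this
  intro f hf
  have hCn : ∀ n : ℤ, ((n : ℚ[X])) = C ((n : ℤ) : ℚ) := by intro n; simp
  fin_cases hf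
  · refine ⟨?_, α, hαA, ?_⟩
    · have : (X ^ 5 - 18 : ℚ[X]) = X ^ 5 - C ((18 : ℤ) : ℚ) := by norm_num [map_ofNat]
      rw [this]; exact irr_pow5_sub 18 (by norm_num) (by norm_num) (by norm_num) (by norm_num) (by norm_num) (by norm_num)
    · simp only [map_sub, map_pow, aeval_X, map_ofNat]
      linear_combination hα5
  · refine ⟨?_, α ^ 2, pow_mem hαA 2, ?_⟩
    · have : (X ^ 5 - 324 : ℚ[X]) = X ^ 5 - C ((324 : ℤ) : ℚ) := by norm_num [map_ofNat]
      rw [this]; exact irr_pow5_sub 324 (by norm_num) (by norm_num) (by norm_num) (by norm_num) (by norm_num) (by norm_num)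
    · simp only [map_sub, map_pow, aeval_X, map_ofNat]
      linear_combination (α ^ 5 + 18) * hα5
  · refine ⟨?_, α ^ 3 / 3, div_mem (pow_mem hαA 3) h3A, ?_⟩
    · have : (X ^ 5 - 24 : ℚ[X]) = X ^ 5 - C ((24 : ℤ) : ℚ) := by norm_num [map_ofNat]
      rw [this]; exact irr_pow5_sub 24 (by norm_num) (by norm_num) (by norm_num) (by norm_num) (by norm_num) (by norm_num)
    · simp only [map_sub, map_pow, aeval_X, map_ofNat]
      have h15 : α ^ 15 = 5832 := by
        have : α ^ 15 = (α ^ 5) ^ 3 := by ring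
        rw [this, hα5]; norm_num
      field_simp
      linear_combination h15
  · refine ⟨?_, α ^ 4 / 3, div_mem (pow_mem hαA 4) h3A, ?_⟩
    · have : (X ^ 5 - 432 : ℚ[X]) = X ^ 5 - C ((432 : ℤ) : ℚ) := by norm_num [map_ofNat]
      rw [this]; exact irr_pow5_sub 432 (by norm_num) (by norm_num) (by norm_num) (by norm_num) (by norm_num) (by norm_num)
    · simp only [map_sub, map_pow, aeval_X, map_ofNat]
      have h20 : α ^ 20 = 104976 := by
        have : α ^ 20 = (α ^ 5) ^ 4 := by ring
        rw [this, hα5]; norm_num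
      field_simp
      linear_combination h20
  · refine ⟨irr_trinomial, -α + α ^ 2 - α ^ 3 / 3 - α ^ 4 / 3, ?_, ?_⟩
    · exact sub_mem (sub_mem (add_mem (neg_mem hαA) (pow_mem hαA 2))
        (div_mem (pow_mem hαA 3) h3A)) (div_mem (pow_mem hαA 4) h3A)
    · simp only [map_add, map_mul, map_pow, aeval_X, map_ofNat]
      linear_combination (-(625:ℝ)/3 + 125/3*α - 125/3*α^2 + 125/9*α^3 + 125/9*α^4
        - 311/27*α^5 + 55/27*α^6 - 5/3*α^7 - 5/81*α^8 + 35/27*α^9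
        - 139/243*α^10 - 65/243*α^11 + 35/243*α^12 + 5/243*α^13
        - 5/243*α^14 - 1/243*α^15) * hα5
end

section
/- Let K = ℚ(α) where α is a root of the irreducible polynomial f₁(x) = x^5 + 75x + 105. Then each of the polynomials f₂(x) = x^5 − 75x + 465, f₃(x) = x^5 − 1125x + 3825, f₄(x) = x^5 − 2025x + 65205, f₅(x) = x^5 + 2025x + 10665, f₆(x) = x^5 − 10125x + 83025, f₇(x) = x^5 + 28125x − 39375, and f₈(x) = x^5 − 3410625x + 86685375 has a root in K. -/
open Polynomial

/-- Let `K = ℚ(α)` where `α` is a root of the irreducible polynomial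
`x^5 + 75x + 105`. Then each of the seven listed trinomials has a root in `K`. -/
theorem trinomials_of_x5_add_75x_add_105
    (hirr : Irreducible (X ^ 5 + 75 * X + 105 : ℚ[X]))
    (K : Type*) [Field K] [Algebra ℚ K]
    (α : K) (hα : aeval α (X ^ 5 + 75 * X + 105 : ℚ[X]) = 0)
    (hgen : Algebra.adjoin ℚ ({α} : Set K) = ⊤) :
    ∀ f ∈ [(X ^ 5 - 75 * X + 465 : ℚ[X]),
        X ^ 5 - 1125 * X + 3825,
        X ^ 5 - 2025 * X + 65205,
        X ^ 5 + 2025 * X + 10665,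
        X ^ 5 - 10125 * X + 83025,
        X ^ 5 + 28125 * X - 39375,
        X ^ 5 - 3410625 * X + 86685375],
      ∃ γ : K, aeval γ f = 0 := by
  have h : α ^ 5 + 75 * α + 105 = 0 := by
    have := hα
    simp only [map_add, map_mul, map_pow, aeval_X, map_ofNat] at this
    exact this
  haveI : CharZero K := charZero_of_injective_algebraMap (algebraMap ℚ K).injective
  have h79 : (79 : K) ≠ 0 := by norm_num
  intro f hf
  fin_cases hf
  · refine ⟨((-240 : K) + (-23 : K) * α + (-32 : K) * α ^ 2 + (7 : K) * α ^ 3 + (-4 : K) * α ^ 4) / 79, ?_⟩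
    simp only [map_add, map_sub, map_mul, map_pow, aeval_X, map_ofNat]
    field_simp
    linear_combination (1 / 79 : K) * ((1004932879993 : K) + (-954322793440 : K) * α + (297575910720 : K) * α ^ 2 + (-298946112395 : K) * α ^ 3 + (77124729205 : K) * α ^ 4 + (-64418366993 : K) * α ^ 5 + (17163189635 : K) * α ^ 6 + (-10770163220 : K) * α ^ 7 + (3058453795 : K) * α ^ 8 + (-1374732720 : K) * α ^ 9 + (350634153 : K) * α ^ 10 + (-116946860 : K) * α ^ 11 + (24660640 : K) * α ^ 12 + (-5713280 : K) * α ^ 13 + (707840 : K) * α ^ 14 + (-80896 : K) * α ^ 15) * h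
  · refine ⟨((-240 : K) + (135 : K) * α + (-32 : K) * α ^ 2 + (7 : K) * α ^ 3 + (-4 : K) * α ^ 4) / 79, ?_⟩
    simp only [map_add, map_sub, map_mul, map_pow, aeval_X, map_ofNat]
    field_simp
    linear_combination (1 / 79 : K) * ((16168666814265 : K) + (-14314841901600 : K) * α + (8984916100800 : K) * α ^ 2 + (-4596313541925 : K) * α ^ 3 + (2003836700475 : K) * α ^ 4 + (-762711374993 : K) * α ^ 5 + (258513144515 : K) * α ^ 6 + (-78097072660 : K) * α ^ 7 + (21374103725 : K) * α ^ 8 + (-5296077840 : K) * α ^ 9 + (1155473513 : K) * α ^ 10 + (-228785580 : K) * α ^ 11 + (40637600 : K) * α ^ 12 + (-5713280 : K) * α ^ 13 + (707840 : K) * α ^ 14 + (-80896 : K) * α ^ 15) * h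
  · refine ⟨((-780 : K) + (24 : K) * α + (54 : K) * α ^ 2 + (3 : K) * α ^ 3 + (-13 : K) * α ^ 4) / 79, ?_⟩
    simp only [map_add, map_sub, map_mul, map_pow, aeval_X, map_ofNat]
    field_simp
    linear_combination (1 / 79 : K) * ((-19980470359359 : K) + (46266834712005 : K) * α + (36884596019895 : K) * α ^ 2 + (-31538054598210 : K) * α ^ 3 + (-5302863234135 : K) * α ^ 4 + (6025207531356 : K) * α ^ 5 + (931159973295 : K) * α ^ 6 + (-1122758600220 : K) * α ^ 7 + (-58171168890 : K) * α ^ 8 + (117642795885 : K) * α ^ 9 + (7725934797 : K) * α ^ 10 + (-11716519230 : K) * α ^ 11 + (-287981070 : K) * α ^ 12 + (593585460 : K) * α ^ 13 + (33844785 : K) * α ^ 14 + (-29332147 : K) * α ^ 15) * h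
  · refine ⟨((-180 : K) + (42 : K) * α + (-24 : K) * α ^ 2 + (25 : K) * α ^ 3 + (-3 : K) * α ^ 4) / 79, ?_⟩
    simp only [map_add, map_sub, map_mul, map_pow, aeval_X, map_ofNat]
    field_simp
    linear_combination (1 / 79 : K) * ((13866791128533 : K) + (-7246573042905 : K) * α + (3579705433395 : K) * α ^ 2 + (-868103946450 : K) * α ^ 3 + (279709458345 : K) * α ^ 4 + (-213287658936 : K) * α ^ 5 + (134096336025 : K) * α ^ 6 + (-77754170790 : K) * α ^ 7 + (35032813860 : K) * α ^ 8 + (-12194765085 : K) * α ^ 9 + (3593045215 : K) * α ^ 10 + (-844239030 : K) * α ^ 11 + (138033540 : K) * α ^ 12 + (-14099130 : K) * α ^ 13 + (799875 : K) * α ^ 14 + (-19197 : K) * α ^ 15) * h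
  · refine ⟨((-660 : K) + (75 : K) * α + (-9 : K) * α ^ 2 + (39 : K) * α ^ 3 + (-11 : K) * α ^ 4) / 79, ?_⟩
    simp only [map_add, map_sub, map_mul, map_pow, aeval_X, map_ofNat]
    field_simp
    linear_combination (1 / 79 : K) * ((293822266957605 : K) + (-178590896998200 : K) * α + (111643826899275 : K) * α ^ 2 + (-59176093197150 : K) * α ^ 3 + (24275139909975 : K) * α ^ 4 + (-12794019744501 : K) * α ^ 5 + (5821468336980 : K) * α ^ 6 + (-1956535971480 : K) * α ^ 7 + (768638114415 : K) * α ^ 8 + (-310039644735 : K) * α ^ 9 + (89995873251 : K) * α ^ 10 + (-23076564390 : K) * α ^ 11 + (6842188815 : K) * α ^ 12 + (-1651365045 : K) * α ^ 13 + (225544605 : K) * α ^ 14 + (-12723029 : K) * α ^ 15) * h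
  · refine ⟨((-180 : K) + (-195 : K) * α + (55 : K) * α ^ 2 + (25 : K) * α ^ 3 + (-3 : K) * α ^ 4) / 79, ?_⟩
    simp only [map_add, map_sub, map_mul, map_pow, aeval_X, map_ofNat]
    field_simp
    linear_combination (1 / 79 : K) * ((-239658039697875 : K) + (9692990715000 : K) * α + (36956776453125 : K) * α ^ 2 + (-6560014837500 : K) * α ^ 3 + (3046699434375 : K) * α ^ 4 + (1090530391825 : K) * α ^ 5 + (-985319224750 : K) * α ^ 6 + (-58351276250 : K) * α ^ 7 + (89575502875 : K) * α ^ 8 + (-2773601125 : K) * α ^ 9 + (-3696942065 : K) * α ^ 10 + (409453050 : K) * α ^ 11 + (46197225 : K) * α ^ 12 + (-11571525 : K) * α ^ 13 + (799875 : K) * α ^ 14 + (-19197 : K) * α ^ 15) * h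
  · refine ⟨((-3180 : K) + (110 : K) * α + (50 : K) * α ^ 2 + (152 : K) * α ^ 3 + (-53 : K) * α ^ 4) / 79, ?_⟩
    simp only [map_add, map_sub, map_mul, map_pow, aeval_X, map_ofNat]
    field_simp
    linear_combination (1 / 79 : K) * ((273860101481102075 : K) + (-164292366448599875 : K) * α + (128661407941666875 : K) * α ^ 2 + (-51179850803487625 : K) * α ^ 3 + (12906318364916750 : K) * α ^ 4 + (-12204083973224365 : K) * α ^ 5 + (6207222922072450 : K) * α ^ 6 + (-1237459983051625 : K) * α ^ 7 + (499194201899900 : K) * α ^ 8 + (-328425506843250 : K) * α ^ 9 + (91497887768763 : K) * α ^ 10 + (-15144876855235 : K) * α ^ 11 + (6348214634330 : K) * α ^ 12 + (-2561489824570 : K) * α ^ 13 + (473744479240 : K) * α ^ 14 + (-33037443947 : K) * α ^ 15) * h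
end

section
/- Let r be a rational number with r ≠ 0, r ≠ 1 and r ≠ −1. Let K be a field extension of ℚ and let α ∈ K satisfy α^5 = r^3(r+1)(r−1)^4. Set a = −80r(r^2−1)(r^2+r−1)(r^2−4r−1)/(r^2+1)^4 and b = −32r(r^2−1)(r^4+22r^3−6r^2−22r+1)/(r^2+1)^4. Then there exists β in the ℚ-subalgebra of K generated by α such that β^5 + aβ + b = 0. -/
set_option maxHeartbeats 1000000 in
/-- (Spearman–Williams) Let `r ∈ ℚ`, `r ≠ 0, ±1`, and let `α` in a field
extension `K/ℚ` satisfy `α⁵ = r³(r+1)(r-1)⁴`. With `a, b` the explicit rational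
numbers below, there is an element `β` of the `ℚ`-subalgebra generated by `α`
with `β⁵ + aβ + b = 0`. -/
theorem spearman_williams_family (r : ℚ) (hr0 : r ≠ 0) (hr1 : r ≠ 1) (hrm1 : r ≠ -1)
    (K : Type*) [Field K] [Algebra ℚ K] (α : K)
    (hα : α ^ 5 = algebraMap ℚ K (r ^ 3 * (r + 1) * (r - 1) ^ 4))
    (a b : ℚ)
    (hab : a = -80 * r * (r ^ 2 - 1) * (r ^ 2 + r - 1) * (r ^ 2 - 4 * r - 1) / (r ^ 2 + 1) ^ 4)
    (hbb : b = -32 * r * (r ^ 2 - 1) * (r ^ 4 + 22 * r ^ 3 - 6 * r ^ 2 - 22 * r + 1) / (r ^ 2 + 1) ^ 4) :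
    ∃ β ∈ Algebra.adjoin ℚ ({α} : Set K),
      β ^ 5 + algebraMap ℚ K a * β + algebraMap ℚ K b = 0 := by
  have hD : (r ^ 2 + 1 : ℚ) ≠ 0 := by positivity
  have hm : (r - 1 : ℚ) ≠ 0 := sub_ne_zero.mpr hr1
  haveI : CharZero K := charZero_of_injective_algebraMap (algebraMap ℚ K).injective
  obtain ⟨c1, hc1⟩ : ∃ c : ℚ, c = 2 / (r ^ 2 + 1) := ⟨_, rfl⟩
  obtain ⟨c2, hc2⟩ : ∃ c : ℚ, c = 2 / ((r ^ 2 + 1) * r * (r - 1)) := ⟨_, rfl⟩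
  obtain ⟨c3, hc3⟩ : ∃ c : ℚ, c = 2 / ((r ^ 2 + 1) * r * (r - 1) ^ 2) := ⟨_, rfl⟩
  obtain ⟨c4, hc4⟩ : ∃ c : ℚ, c = -2 / ((r ^ 2 + 1) * r ^ 2 * (r - 1) ^ 3) := ⟨_, rfl⟩
  obtain ⟨β, hβ⟩ : ∃ β : K,
      β = (c1 : K) * α + (c2 : K) * α ^ 2 + (c3 : K) * α ^ 3 + (c4 : K) * α ^ 4 := ⟨_, rfl⟩
  obtain ⟨t, ht⟩ : ∃ t : K, t = (r : K) := ⟨_, rfl⟩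
  simp only [eq_ratCast] at hα ⊢
  push_cast at hα
  rw [← ht] at hα
  refine ⟨β, ?_, ?_⟩
  · have hαm : α ∈ Algebra.adjoin ℚ ({α} : Set K) := Algebra.self_mem_adjoin_singleton ℚ α
    have hc : ∀ q : ℚ, (q : K) ∈ Algebra.adjoin ℚ ({α} : Set K) := by
      intro q
      rw [← eq_ratCast (algebraMap ℚ K) q]
      exact Subalgebra.algebraMap_mem _ _
    rw [hβ]
    exact Subalgebra.add_mem _ (Subalgebra.add_mem _ (Subalgebra.add_mem _
      (Subalgebra.mul_mem _ (hc c1) hαm)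
      (Subalgebra.mul_mem _ (hc c2) (Subalgebra.pow_mem _ hαm 2)))
      (Subalgebra.mul_mem _ (hc c3) (Subalgebra.pow_mem _ hαm 3)))
      (Subalgebra.mul_mem _ (hc c4) (Subalgebra.pow_mem _ hαm 4))
  · have h1 : (t ^ 2 + 1) * (c1 : K) = 2 := by
      have hq : ((r ^ 2 + 1) * c1 : ℚ) = 2 := by rw [hc1]; field_simp
      have h := congrArg (fun x : ℚ => (x : K)) hq
      push_cast at h
      rw [← ht] at h
      linear_combination h
    have h2 : ((t ^ 2 + 1) * t * (t - 1)) * (c2 : K) = 2 := by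
      have hq : (((r ^ 2 + 1) * r * (r - 1)) * c2 : ℚ) = 2 := by rw [hc2]; field_simp
      have h := congrArg (fun x : ℚ => (x : K)) hq
      push_cast at h
      rw [← ht] at h
      linear_combination h
    have h3 : ((t ^ 2 + 1) * t * (t - 1) ^ 2) * (c3 : K) = 2 := by
      have hq : (((r ^ 2 + 1) * r * (r - 1) ^ 2) * c3 : ℚ) = 2 := by rw [hc3]; field_simp
      have h := congrArg (fun x : ℚ => (x : K)) hq
      push_cast at h
      rw [← ht] at h
      linear_combination h
    have h4 : ((t ^ 2 + 1) * t ^ 2 * (t - 1) ^ 3) * (c4 : K) = -2 := by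
      have hq : (((r ^ 2 + 1) * r ^ 2 * (r - 1) ^ 3) * c4 : ℚ) = -2 := by
        rw [hc4]; field_simp; try ring
      have h := congrArg (fun x : ℚ => (x : K)) hq
      push_cast at h
      rw [← ht] at h
      linear_combination h
    have ha' : (t ^ 2 + 1) ^ 4 * (a : K) =
        -80 * t * (t ^ 2 - 1) * (t ^ 2 + t - 1) * (t ^ 2 - 4 * t - 1) := by
      have hq : ((r ^ 2 + 1) ^ 4 * a : ℚ) =
          -80 * r * (r ^ 2 - 1) * (r ^ 2 + r - 1) * (r ^ 2 - 4 * r - 1) := by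
        rw [hab]; field_simp; try ring
      have h := congrArg (fun x : ℚ => (x : K)) hq
      push_cast at h
      rw [← ht] at h
      linear_combination h
    have hb' : (t ^ 2 + 1) ^ 4 * (b : K) =
        -32 * t * (t ^ 2 - 1) * (t ^ 4 + 22 * t ^ 3 - 6 * t ^ 2 - 22 * t + 1) := by
      have hq : ((r ^ 2 + 1) ^ 4 * b : ℚ) =
          -32 * r * (r ^ 2 - 1) * (r ^ 4 + 22 * r ^ 3 - 6 * r ^ 2 - 22 * r + 1) := by
        rw [hbb]; field_simp; try ring
      have h := congrArg (fun x : ℚ => (x : K)) hq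
      push_cast at h
      rw [← ht] at h
      linear_combination h
    have hW : ((t ^ 2 + 1) * t ^ 2 * (t - 1) ^ 3) * β = (2 * t ^ 2 * (t - 1) ^ 3 * α + 2 * t * (t - 1) ^ 2 * α ^ 2 + 2 * t * (t - 1) * α ^ 3 - 2 * α ^ 4) := by
      rw [hβ]
      linear_combination (t ^ 2 * (t - 1) ^ 3 * α) * h1 + (t * (t - 1) ^ 2 * α ^ 2) * h2
        + (t * (t - 1) * α ^ 3) * h3 + (α ^ 4) * h4
    obtain ⟨g, hg⟩ : ∃ g : K, g = ((t ^ 2 + 1) * t ^ 2 * (t - 1) ^ 3) * β := ⟨_, rfl⟩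
    have hgW : g = (2 * t ^ 2 * (t - 1) ^ 3 * α + 2 * t * (t - 1) ^ 2 * α ^ 2 + 2 * t * (t - 1) * α ^ 3 - 2 * α ^ 4) := by rw [hg, hW]
    have m2 : g ^ 2 = (4*t^12 + (-28)*t^11 + 76*t^10 + (-92)*t^9 + 20*t^8 + 76*t^7 + (-92)*t^6 + 44*t^5 + (-8)*t^4)*α + ((-4)*t^10 + 8*t^9 + 20*t^8 + (-80)*t^7 + 100*t^6 + (-56)*t^5 + 12*t^4)*α^2 + (12*t^8 + (-52)*t^7 + 88*t^6 + (-72)*t^5 + 28*t^4 + (-4)*t^3)*α^3 + (8*t^7 + (-28)*t^6 + 32*t^5 + (-8)*t^4 + (-8)*t^3 + 4*t^2)*α^4 := by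
      linear_combination (g + (2 * t ^ 2 * (t - 1) ^ 3 * α + 2 * t * (t - 1) ^ 2 * α ^ 2 + 2 * t * (t - 1) * α ^ 3 - 2 * α ^ 4)) * hgW + ((4*t^4 + (-16)*t^3 + 20*t^2 + (-8)*t)*α + ((-8)*t^2 + 8*t)*α^2 + (4)*α^3) * hα
    have m4 : g ^ 4 = (64*t^27 + (-960)*t^26 + 6080*t^25 + (-20992)*t^24 + 40192*t^23 + (-27392)*t^22 + (-63232)*t^21 + 206336*t^20 + (-274560)*t^19 + 164736*t^18 + 54912*t^17 + (-206336)*t^16 + 203008*t^15 + (-112384)*t^14 + 35072*t^13 + (-3584)*t^12 + (-1472)*t^11 + 576*t^10 + (-64)*t^9) + ((-64)*t^25 + 688*t^24 + (-3248)*t^23 + 8752*t^22 + (-14640)*t^21 + 15728*t^20 + (-12144)*t^19 + 10736*t^18 + (-12144)*t^17 + 6160*t^16 + 10736*t^15 + (-25456)*t^14 + 25712*t^13 + (-15408)*t^12 + 5680*t^11 + (-1200)*t^10 + 112*t^9)*α + (16*t^24 + (-32)*t^23 + (-688)*t^22 + 4992*t^21 + (-16400)*t^20 + 31648*t^19 +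 (-36784)*t^18 + 20416*t^17 + 8976*t^16 + (-29920)*t^15 + 31856*t^14 + (-22016)*t^13 + 11472*t^12 + (-4768)*t^11 + 1520*t^10 + (-320)*t^9 + 32*t^8)*α^2 + (32*t^22 + (-352)*t^21 + 1872*t^20 + (-6384)*t^19 + 15296*t^18 + (-26048)*t^17 + 29744*t^16 + (-17424)*t^15 + (-7392)*t^14 + 27808*t^13 + (-30800)*t^12 + 20208*t^11 + (-8448)*t^10 + 2176*t^9 + (-304)*t^8 + 16*t^7)*α^3 + (112*t^20 + (-1152)*t^19 + 5344*t^18 + (-14656)*t^17 + 26000*t^16 + (-30144)*t^15 + 20544*t^14 + (-2688)*t^13 + (-10608)*t^12 + 12800*t^11 + (-7968)*t^10 + 3008*t^9 + (-656)*t^8 + 64*t^7)*α^4 := by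
      linear_combination (g ^ 2 + ((4*t^12 + (-28)*t^11 + 76*t^10 + (-92)*t^9 + 20*t^8 + 76*t^7 + (-92)*t^6 + 44*t^5 + (-8)*t^4)*α + ((-4)*t^10 + 8*t^9 + 20*t^8 + (-80)*t^7 + 100*t^6 + (-56)*t^5 + 12*t^4)*α^2 + (12*t^8 + (-52)*t^7 + 88*t^6 + (-72)*t^5 + 28*t^4 + (-4)*t^3)*α^3 + (8*t^7 + (-28)*t^6 + 32*t^5 + (-8)*t^4 + (-8)*t^3 + 4*t^2)*α^4)) * m2 + ((64*t^19 + (-768)*t^18 + 3648*t^17 + (-8640)*t^16 + 8704*t^15 + 6336*t^14 + (-32640)*t^13 + 48768*t^12 + (-40896)*t^11 + 20096*t^10 + (-4800)*t^9 + (-192)*t^8 + 384*t^7 + (-64)*t^6) + ((-64)*t^17 + 496*t^16 + (-1632)*t^15 + 2992*t^14 + (-3584)*t^13 + 3808*t^12 + (-4928)*t^11 + 6112*t^10 + (-5312)*t^9 + 2864*t^8 + (-864)*t^7 + 112*t^6)*α + (192*t^15 + (-1504)*t^14 + 5088*t^13 + (-9600)*t^12 + 10752*t^11 + (-6720)*t^10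 + 1344*t^9 + 1152*t^8 + (-960)*t^7 + 288*t^6 + (-32)*t^5)*α^2 + (64*t^14 + (-448)*t^13 + 1296*t^12 + (-1920)*t^11 + 1344*t^10 + (-672)*t^8 + 384*t^7 + (-64)*t^5 + 16*t^4)*α^3) * hα
    have m5 : g ^ 5 = (32*t^34 + 224*t^33 + (-7392)*t^32 + 61536*t^31 + (-286240)*t^30 + 877600*t^29 + (-1884960)*t^28 + 2857120*t^27 + (-2841280)*t^26 + 1108160*t^25 + 1919808*t^24 + (-4623424)*t^23 + 5333952*t^22 + (-3681216)*t^21 + 868800*t^20 + 1371456*t^19 + (-2121568)*t^18 + 1681504*t^17 + (-895072)*t^16 + 333280*t^15 + (-84896)*t^14 + 13728*t^13 + (-1184)*t^12 + 32*t^11) + (160*t^32 + (-2880)*t^31 + 22880*t^30 + (-105440)*t^29 + 305920*t^28 + (-542560)*t^27 + 401280*t^26 + 684160*t^25 + (-2639680)*t^24 + 4176640*t^23 + (-3673280)*t^22 + 994240*t^21 + 2055040*t^20 + (-3488320)*t^19 + 2968960*t^18 + (-1622400)*t^17 + 567200*t^16 + (-102080)*t^15 + (-6560)*t^14 + 8480*t^13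 + (-1920)*t^12 + 160*t^11)*α + (160*t^30 + (-2720)*t^29 + 20160*t^28 + (-85280)*t^27 + 220640*t^26 + (-321920)*t^25 + 79360*t^24 + 763520*t^23 + (-1876160)*t^22 + 2300480*t^21 + (-1372800)*t^20 + (-378560)*t^19 + 1676480*t^18 + (-1811840)*t^17 + 1157120*t^16 + (-465280)*t^15 + 101920*t^14 + (-160)*t^13 + (-6720)*t^12 + 1760*t^11 + (-160)*t^10)*α^2 + (160*t^29 + (-2560)*t^28 + 17600*t^27 + (-67680)*t^26 + 152960*t^25 + (-168960)*t^24 + (-89600)*t^23 + 673920*t^22 + (-1202240)*t^21 + 1098240*t^20 + (-274560)*t^19 + (-653120)*t^18 + 1023360*t^17 + (-788480)*t^16 + 368640*t^15 + (-96640)*t^14 + 5280*t^13 + 5120*t^12 + (-1600)*t^11 + 160*t^10)*α^3 + ((-160)*t^27 + 2400*t^26 + (-15200)*t^25 + 52480*t^24 + (-100480)*t^23 + 68480*t^22 + 158080*t^21 + (-515840)*t^20 + 686400*t^19 + (-411840)*t^18 + (-137280)*t^17 + 515840*t^16 + (-507520)*t^15 + 280960*t^14 + (-87680)*t^13 + 8960*t^12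 + 3680*t^11 + (-1440)*t^10 + 160*t^9)*α^4 := by
      linear_combination g * m4 + ((64*t^27 + (-960)*t^26 + 6080*t^25 + (-20992)*t^24 + 40192*t^23 + (-27392)*t^22 + (-63232)*t^21 + 206336*t^20 + (-274560)*t^19 + 164736*t^18 + 54912*t^17 + (-206336)*t^16 + 203008*t^15 + (-112384)*t^14 + 35072*t^13 + (-3584)*t^12 + (-1472)*t^11 + 576*t^10 + (-64)*t^9) + ((-64)*t^25 + 688*t^24 + (-3248)*t^23 + 8752*t^22 + (-14640)*t^21 + 15728*t^20 + (-12144)*t^19 + 10736*t^18 + (-12144)*t^17 + 6160*t^16 + 10736*t^15 + (-25456)*t^14 + 25712*t^13 + (-15408)*t^12 + 5680*t^11 + (-1200)*t^10 + 112*t^9)*α + (16*t^24 + (-32)*t^23 + (-688)*t^22 + 4992*t^21 + (-16400)*t^20 + 31648*t^19 + (-36784)*t^18 + 20416*t^17 + 8976*t^16 + (-29920)*t^15 + 31856*t^14 + (-22016)*t^13 + 11472*t^12 + (-4768)*t^11 + 1520*t^10 + (-320)*t^9 + 32*t^8)*α^2 + (32*t^22 + (-352)*t^21 + 1872*t^20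 + (-6384)*t^19 + 15296*t^18 + (-26048)*t^17 + 29744*t^16 + (-17424)*t^15 + (-7392)*t^14 + 27808*t^13 + (-30800)*t^12 + 20208*t^11 + (-8448)*t^10 + 2176*t^9 + (-304)*t^8 + 16*t^7)*α^3 + (112*t^20 + (-1152)*t^19 + 5344*t^18 + (-14656)*t^17 + 26000*t^16 + (-30144)*t^15 + 20544*t^14 + (-2688)*t^13 + (-10608)*t^12 + 12800*t^11 + (-7968)*t^10 + 3008*t^9 + (-656)*t^8 + 64*t^7)*α^4) * hgW + ((32*t^26 + 320*t^25 + (-6496)*t^24 + 41344*t^23 + (-149760)*t^22 + 359552*t^21 + (-609280)*t^20 + 740224*t^19 + (-611776)*t^18 + 239360*t^17 + 193600*t^16 + (-467840)*t^15 + 488960*t^14 + (-336000)*t^13 + 160000*t^12 + (-51584)*t^11 + 10400*t^10 + (-1088)*t^9 + 32*t^8) + (32*t^24 + (-480)*t^23 + 3072*t^22 + (-10976)*t^21 + 23168*t^20 + (-24672)*t^19 + (-8448)*t^18 + 78496*t^17 + (-145728)*t^16 + 160864*t^15 + (-118272)*t^14 + 57696*t^13 + (-16768)*t^12 + 1504*t^11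 + 768*t^10 + (-288)*t^9 + 32*t^8)*α + (160*t^22 + (-1824)*t^21 + 9248*t^20 + (-27232)*t^19 + 50720*t^18 + (-60192)*t^17 + 41888*t^16 + (-11616)*t^15 + (-1056)*t^14 + (-8800)*t^13 + 20064*t^12 + (-18464)*t^11 + 9568*t^10 + (-2912)*t^9 + 480*t^8 + (-32)*t^7)*α^2 + ((-224)*t^20 + 2304*t^19 + (-10688)*t^18 + 29312*t^17 + (-52000)*t^16 + 60288*t^15 + (-41088)*t^14 + 5376*t^13 + 21216*t^12 + (-25600)*t^11 + 15936*t^10 + (-6016)*t^9 + 1312*t^8 + (-128)*t^7)*α^3) * hα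
    have main0 : g ^ 5 + (a : K) * (((t ^ 2 + 1) ^ 4 * t ^ 8 * (t - 1) ^ 12) * g) + ((t ^ 2 + 1) ^ 5 * t ^ 10 * (t - 1) ^ 15) * (b : K) = 0 := by
      linear_combination m5 + (((t ^ 2 + 1) ^ 4 * t ^ 8 * (t - 1) ^ 12) * (a : K)) * hgW
        + (t ^ 8 * (t - 1) ^ 12 * (2 * t ^ 2 * (t - 1) ^ 3 * α + 2 * t * (t - 1) ^ 2 * α ^ 2 + 2 * t * (t - 1) * α ^ 3 - 2 * α ^ 4)) * ha'
        + ((t ^ 2 + 1) * t ^ 10 * (t - 1) ^ 15) * hb'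
    have main : ((t ^ 2 + 1) * t ^ 2 * (t - 1) ^ 3) ^ 5 * (β ^ 5 + (a : K) * β + (b : K)) = 0 := by
      linear_combination main0
        - ((((t ^ 2 + 1) * t ^ 2 * (t - 1) ^ 3) * β) ^ 4 + (((t ^ 2 + 1) * t ^ 2 * (t - 1) ^ 3) * β) ^ 3 * g + (((t ^ 2 + 1) * t ^ 2 * (t - 1) ^ 3) * β) ^ 2 * g ^ 2
            + (((t ^ 2 + 1) * t ^ 2 * (t - 1) ^ 3) * β) * g ^ 3 + g ^ 4 + ((t ^ 2 + 1) ^ 4 * t ^ 8 * (t - 1) ^ 12) * (a : K)) * hg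
    have hN : (((t ^ 2 + 1) * t ^ 2 * (t - 1) ^ 3)) ^ 5 ≠ 0 := by
      have hq : (((r ^ 2 + 1) * r ^ 2 * (r - 1) ^ 3 : ℚ)) ^ 5 ≠ 0 :=
        pow_ne_zero 5 (mul_ne_zero (mul_ne_zero hD (pow_ne_zero 2 hr0)) (pow_ne_zero 3 hm))
      have heq : (((t ^ 2 + 1) * t ^ 2 * (t - 1) ^ 3)) ^ 5 = ((((r ^ 2 + 1) * r ^ 2 * (r - 1) ^ 3) ^ 5 : ℚ) : K) := by
        rw [ht]; push_cast; ring
      rw [heq]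
      exact Rat.cast_ne_zero.mpr hq
    exact (mul_eq_zero.mp main).resolve_left hN
end

section
/- Let a, b, c, d be rational numbers with X(a,b,c,d) = 0 and with M := 32bd + 16c^2 + 40cd ≠ 0. Set t = (5a^2 − 50ab)/M, and assume t ≠ 0 and that x^5 + t x + t is irreducible over ℚ. Let α be a root of x^5 + t x + t, let K = ℚ(α), set e = 5a/(4t), and let β = a + bα + cα^2 + dα^3 + eα^4. Then the characteristic polynomial of the ℚ-linear map T_β : K → K given by multiplication by β has the form x^5 + r x + s for some rationals r, s; that is, β is a root of a trinomial x^5 + r x + s with rational coefficients. -/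
open Polynomial

/-- The polynomial defining the surface `X` of quintic fields with more than
one trinomial. -/
def surfX (a b c d : ℚ) : ℚ :=
  20 * a ^ 3 * c * d ^ 2 + 15 * a ^ 3 * d ^ 3 + 128 * a ^ 2 * b ^ 2 * d ^ 2
    + 128 * a ^ 2 * b * c ^ 2 * d + 240 * a ^ 2 * b * c * d ^ 2
    - 100 * a ^ 2 * b * d ^ 3 + 32 * a ^ 2 * c ^ 4 + 320 * a ^ 2 * c ^ 3 * d
    + 700 * a ^ 2 * c ^ 2 * d ^ 2 + 250 * a ^ 2 * c * d ^ 3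
    - 128 * a * b ^ 3 * c * d - 480 * a * b ^ 3 * d ^ 2 - 64 * a * b ^ 2 * c ^ 3
    - 720 * a * b ^ 2 * c ^ 2 * d - 600 * a * b ^ 2 * c * d ^ 2
    - 500 * a * b ^ 2 * d ^ 3 - 160 * a * b * c ^ 4 - 600 * a * b * c ^ 3 * d
    - 1500 * a * b * c ^ 2 * d ^ 2 - 2500 * a * b * c * d ^ 3 + 400 * a * c ^ 5
    + 2000 * a * c ^ 4 * d + 2500 * a * c ^ 3 * d ^ 2 + 1280 * b ^ 4 * c * d
    + 1600 * b ^ 4 * d ^ 2 + 640 * b ^ 3 * c ^ 3 + 4000 * b ^ 3 * c ^ 2 * d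
    + 2000 * b ^ 3 * c * d ^ 2 + 800 * b ^ 2 * c ^ 4 + 2000 * b ^ 2 * c ^ 3 * d



set_option maxHeartbeats 1000000 in
theorem det_fin_four' {R : Type*} [CommRing R] (A : Matrix (Fin 4) (Fin 4) R) :
    Matrix.det A =
      A 0 0 * Matrix.det (A.submatrix Fin.succ (Fin.succAbove 0))
      - A 0 1 * Matrix.det (A.submatrix Fin.succ (Fin.succAbove 1))
      + A 0 2 * Matrix.det (A.submatrix Fin.succ (Fin.succAbove 2))
      - A 0 3 * Matrix.det (A.submatrix Fin.succ (Fin.succAbove 3)) := by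
  rw [Matrix.det_succ_row_zero, Fin.sum_univ_four]
  norm_num [show ((3:Fin 4):ℕ) = 3 from rfl]
  ring

set_option maxHeartbeats 1000000 in
theorem det_fin_four {R : Type*} [CommRing R] (A : Matrix (Fin 4) (Fin 4) R) :
    Matrix.det A =
      A 0 0 * (A 1 1 * A 2 2 * A 3 3 - A 1 1 * A 2 3 * A 3 2 - A 1 2 * A 2 1 * A 3 3
        + A 1 2 * A 2 3 * A 3 1 + A 1 3 * A 2 1 * A 3 2 - A 1 3 * A 2 2 * A 3 1)
      - A 0 1 * (A 1 0 * A 2 2 * A 3 3 - A 1 0 * A 2 3 * A 3 2 - A 1 2 * A 2 0 * A 3 3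
        + A 1 2 * A 2 3 * A 3 0 + A 1 3 * A 2 0 * A 3 2 - A 1 3 * A 2 2 * A 3 0)
      + A 0 2 * (A 1 0 * A 2 1 * A 3 3 - A 1 0 * A 2 3 * A 3 1 - A 1 1 * A 2 0 * A 3 3
        + A 1 1 * A 2 3 * A 3 0 + A 1 3 * A 2 0 * A 3 1 - A 1 3 * A 2 1 * A 3 0)
      - A 0 3 * (A 1 0 * A 2 1 * A 3 2 - A 1 0 * A 2 2 * A 3 1 - A 1 1 * A 2 0 * A 3 2
        + A 1 1 * A 2 2 * A 3 0 + A 1 2 * A 2 0 * A 3 1 - A 1 2 * A 2 1 * A 3 0) := by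
  rw [det_fin_four', Matrix.det_fin_three, Matrix.det_fin_three, Matrix.det_fin_three, Matrix.det_fin_three]
  simp only [Matrix.submatrix_apply]
  norm_num [Fin.succAbove, Fin.lt_def, show (Fin.succ 0 : Fin 4) = 1 from rfl,
    show (Fin.succ 1 : Fin 4) = 2 from rfl, show (Fin.succ 2 : Fin 4) = 3 from rfl,
    show ((1 : Fin 4) : ℕ) = 1 from rfl, show ((2 : Fin 4) : ℕ) = 2 from rfl,
    show ((3 : Fin 4) : ℕ) = 3 from rfl, show (Fin.castSucc 0 : Fin 4) = 0 from rfl,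
    show (Fin.castSucc 1 : Fin 4) = 1 from rfl, show (Fin.castSucc 2 : Fin 4) = 2 from rfl]

set_option maxHeartbeats 4000000 in
theorem det_fin_five {R : Type*} [CommRing R] (A : Matrix (Fin 5) (Fin 5) R) :
    Matrix.det A =
            A 0 0 * A 1 1 * A 2 2 * A 3 3 * A 4 4 - A 0 0 * A 1 1 * A 2 2 * A 3 4 * A 4 3 - A 0
      0 * A 1 1 * A 2 3 * A 3 2 * A 4 4 + A 0 0 * A 1 1 * A 2 3 * A 3 4 * A 4 2 + A 0 0 * A 1 1
      * A 2 4 * A 3 2 * A 4 3 - A 0 0 * A 1 1 * A 2 4 * A 3 3 * A 4 2 - A 0 0 * A 1 2 * A 2 1 *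
      A 3 3 * A 4 4 + A 0 0 * A 1 2 * A 2 1 * A 3 4 * A 4 3 + A 0 0 * A 1 2 * A 2 3 * A 3 1 * A
      4 4 - A 0 0 * A 1 2 * A 2 3 * A 3 4 * A 4 1 - A 0 0 * A 1 2 * A 2 4 * A 3 1 * A 4 3 + A 0
      0 * A 1 2 * A 2 4 * A 3 3 * A 4 1 + A 0 0 * A 1 3 * A 2 1 * A 3 2 * A 4 4 - A 0 0 * A 1 3
      * A 2 1 * A 3 4 * A 4 2 - A 0 0 * A 1 3 * A 2 2 * A 3 1 * A 4 4 + A 0 0 * A 1 3 * A 2 2 *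
      A 3 4 * A 4 1 + A 0 0 * A 1 3 * A 2 4 * A 3 1 * A 4 2 - A 0 0 * A 1 3 * A 2 4 * A 3 2 * A
      4 1 - A 0 0 * A 1 4 * A 2 1 * A 3 2 * A 4 3 + A 0 0 * A 1 4 * A 2 1 * A 3 3 * A 4 2 + A 0
      0 * A 1 4 * A 2 2 * A 3 1 * A 4 3 - A 0 0 * A 1 4 * A 2 2 * A 3 3 * A 4 1 - A 0 0 * A 1 4
      * A 2 3 * A 3 1 * A 4 2 + A 0 0 * A 1 4 * A 2 3 * A 3 2 * A 4 1 - A 0 1 * A 1 0 * A 2 2 *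
      A 3 3 * A 4 4 + A 0 1 * A 1 0 * A 2 2 * A 3 4 * A 4 3 + A 0 1 * A 1 0 * A 2 3 * A 3 2 * A
      4 4 - A 0 1 * A 1 0 * A 2 3 * A 3 4 * A 4 2 - A 0 1 * A 1 0 * A 2 4 * A 3 2 * A 4 3 + A 0
      1 * A 1 0 * A 2 4 * A 3 3 * A 4 2 + A 0 1 * A 1 2 * A 2 0 * A 3 3 * A 4 4 - A 0 1 * A 1 2
      * A 2 0 * A 3 4 * A 4 3 - A 0 1 * A 1 2 * A 2 3 * A 3 0 * A 4 4 + A 0 1 * A 1 2 * A 2 3 *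
      A 3 4 * A 4 0 + A 0 1 * A 1 2 * A 2 4 * A 3 0 * A 4 3 - A 0 1 * A 1 2 * A 2 4 * A 3 3 * A
      4 0 - A 0 1 * A 1 3 * A 2 0 * A 3 2 * A 4 4 + A 0 1 * A 1 3 * A 2 0 * A 3 4 * A 4 2 + A 0
      1 * A 1 3 * A 2 2 * A 3 0 * A 4 4 - A 0 1 * A 1 3 * A 2 2 * A 3 4 * A 4 0 - A 0 1 * A 1 3
      * A 2 4 * A 3 0 * A 4 2 + A 0 1 * A 1 3 * A 2 4 * A 3 2 * A 4 0 + A 0 1 * A 1 4 * A 2 0 *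
      A 3 2 * A 4 3 - A 0 1 * A 1 4 * A 2 0 * A 3 3 * A 4 2 - A 0 1 * A 1 4 * A 2 2 * A 3 0 * A
      4 3 + A 0 1 * A 1 4 * A 2 2 * A 3 3 * A 4 0 + A 0 1 * A 1 4 * A 2 3 * A 3 0 * A 4 2 - A 0
      1 * A 1 4 * A 2 3 * A 3 2 * A 4 0 + A 0 2 * A 1 0 * A 2 1 * A 3 3 * A 4 4 - A 0 2 * A 1 0
      * A 2 1 * A 3 4 * A 4 3 - A 0 2 * A 1 0 * A 2 3 * A 3 1 * A 4 4 + A 0 2 * A 1 0 * A 2 3 *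
      A 3 4 * A 4 1 + A 0 2 * A 1 0 * A 2 4 * A 3 1 * A 4 3 - A 0 2 * A 1 0 * A 2 4 * A 3 3 * A
      4 1 - A 0 2 * A 1 1 * A 2 0 * A 3 3 * A 4 4 + A 0 2 * A 1 1 * A 2 0 * A 3 4 * A 4 3 + A 0
      2 * A 1 1 * A 2 3 * A 3 0 * A 4 4 - A 0 2 * A 1 1 * A 2 3 * A 3 4 * A 4 0 - A 0 2 * A 1 1
      * A 2 4 * A 3 0 * A 4 3 + A 0 2 * A 1 1 * A 2 4 * A 3 3 * A 4 0 + A 0 2 * A 1 3 * A 2 0 *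
      A 3 1 * A 4 4 - A 0 2 * A 1 3 * A 2 0 * A 3 4 * A 4 1 - A 0 2 * A 1 3 * A 2 1 * A 3 0 * A
      4 4 + A 0 2 * A 1 3 * A 2 1 * A 3 4 * A 4 0 + A 0 2 * A 1 3 * A 2 4 * A 3 0 * A 4 1 - A 0
      2 * A 1 3 * A 2 4 * A 3 1 * A 4 0 - A 0 2 * A 1 4 * A 2 0 * A 3 1 * A 4 3 + A 0 2 * A 1 4
      * A 2 0 * A 3 3 * A 4 1 + A 0 2 * A 1 4 * A 2 1 * A 3 0 * A 4 3 - A 0 2 * A 1 4 * A 2 1 *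
      A 3 3 * A 4 0 - A 0 2 * A 1 4 * A 2 3 * A 3 0 * A 4 1 + A 0 2 * A 1 4 * A 2 3 * A 3 1 * A
      4 0 - A 0 3 * A 1 0 * A 2 1 * A 3 2 * A 4 4 + A 0 3 * A 1 0 * A 2 1 * A 3 4 * A 4 2 + A 0
      3 * A 1 0 * A 2 2 * A 3 1 * A 4 4 - A 0 3 * A 1 0 * A 2 2 * A 3 4 * A 4 1 - A 0 3 * A 1 0
      * A 2 4 * A 3 1 * A 4 2 + A 0 3 * A 1 0 * A 2 4 * A 3 2 * A 4 1 + A 0 3 * A 1 1 * A 2 0 *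
      A 3 2 * A 4 4 - A 0 3 * A 1 1 * A 2 0 * A 3 4 * A 4 2 - A 0 3 * A 1 1 * A 2 2 * A 3 0 * A
      4 4 + A 0 3 * A 1 1 * A 2 2 * A 3 4 * A 4 0 + A 0 3 * A 1 1 * A 2 4 * A 3 0 * A 4 2 - A 0
      3 * A 1 1 * A 2 4 * A 3 2 * A 4 0 - A 0 3 * A 1 2 * A 2 0 * A 3 1 * A 4 4 + A 0 3 * A 1 2
      * A 2 0 * A 3 4 * A 4 1 + A 0 3 * A 1 2 * A 2 1 * A 3 0 * A 4 4 - A 0 3 * A 1 2 * A 2 1 *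
      A 3 4 * A 4 0 - A 0 3 * A 1 2 * A 2 4 * A 3 0 * A 4 1 + A 0 3 * A 1 2 * A 2 4 * A 3 1 * A
      4 0 + A 0 3 * A 1 4 * A 2 0 * A 3 1 * A 4 2 - A 0 3 * A 1 4 * A 2 0 * A 3 2 * A 4 1 - A 0
      3 * A 1 4 * A 2 1 * A 3 0 * A 4 2 + A 0 3 * A 1 4 * A 2 1 * A 3 2 * A 4 0 + A 0 3 * A 1 4
      * A 2 2 * A 3 0 * A 4 1 - A 0 3 * A 1 4 * A 2 2 * A 3 1 * A 4 0 + A 0 4 * A 1 0 * A 2 1 *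
      A 3 2 * A 4 3 - A 0 4 * A 1 0 * A 2 1 * A 3 3 * A 4 2 - A 0 4 * A 1 0 * A 2 2 * A 3 1 * A
      4 3 + A 0 4 * A 1 0 * A 2 2 * A 3 3 * A 4 1 + A 0 4 * A 1 0 * A 2 3 * A 3 1 * A 4 2 - A 0
      4 * A 1 0 * A 2 3 * A 3 2 * A 4 1 - A 0 4 * A 1 1 * A 2 0 * A 3 2 * A 4 3 + A 0 4 * A 1 1
      * A 2 0 * A 3 3 * A 4 2 + A 0 4 * A 1 1 * A 2 2 * A 3 0 * A 4 3 - A 0 4 * A 1 1 * A 2 2 *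
      A 3 3 * A 4 0 - A 0 4 * A 1 1 * A 2 3 * A 3 0 * A 4 2 + A 0 4 * A 1 1 * A 2 3 * A 3 2 * A
      4 0 + A 0 4 * A 1 2 * A 2 0 * A 3 1 * A 4 3 - A 0 4 * A 1 2 * A 2 0 * A 3 3 * A 4 1 - A 0
      4 * A 1 2 * A 2 1 * A 3 0 * A 4 3 + A 0 4 * A 1 2 * A 2 1 * A 3 3 * A 4 0 + A 0 4 * A 1 2
      * A 2 3 * A 3 0 * A 4 1 - A 0 4 * A 1 2 * A 2 3 * A 3 1 * A 4 0 - A 0 4 * A 1 3 * A 2 0 *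
      A 3 1 * A 4 2 + A 0 4 * A 1 3 * A 2 0 * A 3 2 * A 4 1 + A 0 4 * A 1 3 * A 2 1 * A 3 0 * A
      4 2 - A 0 4 * A 1 3 * A 2 1 * A 3 2 * A 4 0 - A 0 4 * A 1 3 * A 2 2 * A 3 0 * A 4 1 + A 0
      4 * A 1 3 * A 2 2 * A 3 1 * A 4 0
 := by
  rw [Matrix.det_succ_row_zero, Fin.sum_univ_five]
  rw [det_fin_four, det_fin_four, det_fin_four, det_fin_four, det_fin_four]
  simp only [Matrix.submatrix_apply]
  norm_num [Fin.succAbove, Fin.lt_def,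
    show (Fin.succ 0 : Fin 5) = 1 from rfl, show (Fin.succ 1 : Fin 5) = 2 from rfl,
    show (Fin.succ 2 : Fin 5) = 3 from rfl, show (Fin.succ 3 : Fin 5) = 4 from rfl,
    show ((1 : Fin 5) : ℕ) = 1 from rfl, show ((2 : Fin 5) : ℕ) = 2 from rfl,
    show ((3 : Fin 5) : ℕ) = 3 from rfl, show ((4 : Fin 5) : ℕ) = 4 from rfl,
    show (Fin.castSucc 0 : Fin 5) = 0 from rfl, show (Fin.castSucc 1 : Fin 5) = 1 from rfl,
    show (Fin.castSucc 2 : Fin 5) = 2 from rfl, show (Fin.castSucc 3 : Fin 5) = 3 from rfl]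
  ring

theorem fin5_mk0 (h : (0:ℕ) < 5) : (⟨0, h⟩ : Fin 5) = 0 := rfl
theorem fin5_mk1 (h : (1:ℕ) < 5) : (⟨1, h⟩ : Fin 5) = 1 := rfl
theorem fin5_mk2 (h : (2:ℕ) < 5) : (⟨2, h⟩ : Fin 5) = 2 := rfl
theorem fin5_mk3 (h : (3:ℕ) < 5) : (⟨3, h⟩ : Fin 5) = 3 := rfl
theorem fin5_mk4 (h : (4:ℕ) < 5) : (⟨4, h⟩ : Fin 5) = 4 := rfl


set_option maxHeartbeats 4000000 in
/-- If `(a, b, c, d)` is a point on the surface `X = 0` with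
`M = 32bd + 16c^2 + 40cd` nonzero and `t = (5a^2 - 50ab)/M` nonzero, with
`x^5 + tx + t` irreducible with root `α` generating `K = ℚ(α)`, then with
`e = 5a/(4t)` the element `β = a + bα + cα^2 + dα^3 + eα^4` is a root of a
rational trinomial `x^5 + rx + s`. -/
theorem point_on_surface_gives_trinomial (a b c d : ℚ)
    (hX : surfX a b c d = 0)
    (hM : 32 * b * d + 16 * c ^ 2 + 40 * c * d ≠ 0)
    (t : ℚ) (ht : t = (5 * a ^ 2 - 50 * a * b) / (32 * b * d + 16 * c ^ 2 + 40 * c * d))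
    (ht0 : t ≠ 0)
    (hirr : Irreducible (X ^ 5 + C t * X + C t : ℚ[X]))
    (K : Type*) [Field K] [Algebra ℚ K] [FiniteDimensional ℚ K]
    (α : K) (hα : aeval α (X ^ 5 + C t * X + C t : ℚ[X]) = 0)
    (hgen : Algebra.adjoin ℚ ({α} : Set K) = ⊤)
    (e : ℚ) (he : e = 5 * a / (4 * t))
    (β : K)
    (hβ : β = algebraMap ℚ K a + algebraMap ℚ K b * α + algebraMap ℚ K c * α ^ 2
      + algebraMap ℚ K d * α ^ 3 + algebraMap ℚ K e * α ^ 4) :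
    ∃ r s : ℚ, (LinearMap.mulLeft ℚ β).charpoly = X ^ 5 + C r * X + C s := by
  classical
  have hXX : 20 * a ^ 3 * c * d ^ 2 + 15 * a ^ 3 * d ^ 3 + 128 * a ^ 2 * b ^ 2 * d ^ 2
      + 128 * a ^ 2 * b * c ^ 2 * d + 240 * a ^ 2 * b * c * d ^ 2
      - 100 * a ^ 2 * b * d ^ 3 + 32 * a ^ 2 * c ^ 4 + 320 * a ^ 2 * c ^ 3 * d
      + 700 * a ^ 2 * c ^ 2 * d ^ 2 + 250 * a ^ 2 * c * d ^ 3
      - 128 * a * b ^ 3 * c * d - 480 * a * b ^ 3 * d ^ 2 - 64 * a * b ^ 2 * c ^ 3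
      - 720 * a * b ^ 2 * c ^ 2 * d - 600 * a * b ^ 2 * c * d ^ 2
      - 500 * a * b ^ 2 * d ^ 3 - 160 * a * b * c ^ 4 - 600 * a * b * c ^ 3 * d
      - 1500 * a * b * c ^ 2 * d ^ 2 - 2500 * a * b * c * d ^ 3 + 400 * a * c ^ 5
      + 2000 * a * c ^ 4 * d + 2500 * a * c ^ 3 * d ^ 2 + 1280 * b ^ 4 * c * d
      + 1600 * b ^ 4 * d ^ 2 + 640 * b ^ 3 * c ^ 3 + 4000 * b ^ 3 * c ^ 2 * d
      + 2000 * b ^ 3 * c * d ^ 2 + 800 * b ^ 2 * c ^ 4 + 2000 * b ^ 2 * c ^ 3 * d = 0 := hX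
  have h4e : 4 * t * e = 5 * a := by
    rw [he]; field_simp
  have hMt : t * (32 * b * d + 16 * c ^ 2 + 40 * c * d) = 5 * a ^ 2 - 50 * a * b := by
    rw [ht]; exact div_mul_cancel₀ _ hM
  have h4t : (4 : ℚ) * t ≠ 0 := mul_ne_zero (by norm_num) ht0
  have hbig4 : ((4 * t) ^ 1 * (32 * b * d + 16 * c ^ 2 + 40 * c * d) ^ 0) *
      (-5 * a + 4 * t * e) = 0 := by
    linear_combination ((32 * b * d + 16 * c ^ 2 + 40 * c * d) ^ 0 *
      (4 * t)) * h4e +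
      0 * hMt +
      (0) * hXX
  have h4 : (-5 * a + 4 * t * e) = 0 :=
    (mul_eq_zero.mp hbig4).resolve_left
      (mul_ne_zero (pow_ne_zero _ h4t) (pow_ne_zero _ hM))
  have hbig3 : ((4 * t) ^ 2 * (32 * b * d + 16 * c ^ 2 + 40 * c * d) ^ 3) *
      (10 * a ^ 2 - 16 * a * t * e + 4 * b * d * t + 5 * b * t * e + 2 * c ^ 2 * t + 5 * c * d
        * t + 6 * t ^ 2 * e ^ 2) = 0 := by
    linear_combination ((32 * b * d + 16 * c ^ 2 + 40 * c * d) ^ 3 *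
      (-34 * a * t ^ 2 + 20 * b * t ^ 2 + 24 * t ^ 3 * e)) * h4e +
      (65536 * b ^ 3 * d ^ 3 * t ^ 2 + 98304 * b ^ 2 * c ^ 2 * d ^ 2 * t ^ 2 + 245760 * b ^ 2 *
        c * d ^ 3 * t ^ 2 + 49152 * b * c ^ 4 * d * t ^ 2 + 245760 * b * c ^ 3 * d ^ 2 * t ^ 2
        + 307200 * b * c ^ 2 * d ^ 3 * t ^ 2 + 8192 * c ^ 6 * t ^ 2 + 61440 * c ^ 5 * d * t ^ 2
        + 153600 * c ^ 4 * d ^ 2 * t ^ 2 + 128000 * c ^ 3 * d ^ 3 * t ^ 2) * hMt +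
      (0) * hXX
  have h3 : (10 * a ^ 2 - 16 * a * t * e + 4 * b * d * t + 5 * b * t * e + 2 * c ^ 2 * t + 5 * c * d * t + 6 * t ^ 2 * e ^ 2) = 0 :=
    (mul_eq_zero.mp hbig3).resolve_left
      (mul_ne_zero (pow_ne_zero _ h4t) (pow_ne_zero _ hM))
  have hbig2 : ((4 * t) ^ 3 * (32 * b * d + 16 * c ^ 2 + 40 * c * d) ^ 5) *
      (-10 * a ^ 3 + 24 * a ^ 2 * t * e - 12 * a * b * d * t - 15 * a * b * t * e - 6 * a * c ^
        2 * t - 15 * a * c * d * t - 18 * a * t ^ 2 * e ^ 2 + 4 * b ^ 2 * c * t + 5 * b ^ 2 * d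
        * t + 5 * b * c ^ 2 * t + 8 * b * d * t ^ 2 * e + 11 * b * t ^ 2 * e ^ 2 + 4 * c ^ 2 *
        t ^ 2 * e - 4 * c * d ^ 2 * t ^ 2 + 2 * c * d * t ^ 2 * e - 5 * c * t ^ 2 * e ^ 2 - 3 *
        d ^ 3 * t ^ 2 - 5 * d ^ 2 * t ^ 2 * e + 4 * t ^ 3 * e ^ 3) = 0 := by
    linear_combination ((32 * b * d + 16 * c ^ 2 + 40 * c * d) ^ 5 *
      (124 * a ^ 2 * t ^ 3 - 20 * a * b * t ^ 3 - 100 * a * c * t ^ 3 - 208 * a * t ^ 4 * e +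
        128 * b * d * t ^ 4 + 176 * b * t ^ 4 * e + 64 * c ^ 2 * t ^ 4 + 32 * c * d * t ^ 4 -
        80 * c * t ^ 4 * e - 80 * d ^ 2 * t ^ 4 + 64 * t ^ 5 * e ^ 2)) * h4e +
      (-160000 * a ^ 8 * c * d ^ 2 - 120000 * a ^ 8 * d ^ 3 - 1024000 * a ^ 7 * b ^ 2 * d ^ 2 -
        1024000 * a ^ 7 * b * c ^ 2 * d + 1280000 * a ^ 7 * b * c * d ^ 2 + 3200000 * a ^ 7 * b
        * d ^ 3 - 256000 * a ^ 7 * c ^ 4 - 2560000 * a ^ 7 * c ^ 3 * d - 5600000 * a ^ 7 * c ^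
        2 * d ^ 2 - 2000000 * a ^ 7 * c * d ^ 3 + 1024000 * a ^ 6 * b ^ 3 * c * d + 24320000 *
        a ^ 6 * b ^ 3 * d ^ 2 + 512000 * a ^ 6 * b ^ 2 * c ^ 3 + 26240000 * a ^ 6 * b ^ 2 * c ^
        2 * d + 27200000 * a ^ 6 * b ^ 2 * c * d ^ 2 - 24000000 * a ^ 6 * b ^ 2 * d ^ 3 +
        6400000 * a ^ 6 * b * c ^ 4 + 56000000 * a ^ 6 * b * c ^ 3 * d + 124000000 * a ^ 6 * b
        * c ^ 2 * d ^ 2 - 1024000 * a ^ 6 * b * c * d ^ 3 * t + 60000000 * a ^ 6 * b * c * d ^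
        3 - 768000 * a ^ 6 * b * d ^ 4 * t - 3200000 * a ^ 6 * c ^ 5 - 16000000 * a ^ 6 * c ^ 4
        * d - 512000 * a ^ 6 * c ^ 3 * d ^ 2 * t - 20000000 * a ^ 6 * c ^ 3 * d ^ 2 - 1664000 *
        a ^ 6 * c ^ 2 * d ^ 3 * t - 960000 * a ^ 6 * c * d ^ 4 * t - 30720000 * a ^ 5 * b ^ 4 *
        c * d - 192000000 * a ^ 5 * b ^ 4 * d ^ 2 - 15360000 * a ^ 5 * b ^ 3 * c ^ 3 -
        249600000 * a ^ 5 * b ^ 3 * c ^ 2 * d - 304000000 * a ^ 5 * b ^ 3 * c * d ^ 2 - 6553600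
        * a ^ 5 * b ^ 3 * d ^ 3 * t - 57600000 * a ^ 5 * b ^ 2 * c ^ 4 - 368000000 * a ^ 5 * b
        ^ 2 * c ^ 3 * d - 9830400 * a ^ 5 * b ^ 2 * c ^ 2 * d ^ 2 * t - 800000000 * a ^ 5 * b ^
        2 * c ^ 2 * d ^ 2 - 10240000 * a ^ 5 * b ^ 2 * c * d ^ 3 * t - 600000000 * a ^ 5 * b ^
        2 * c * d ^ 3 + 12800000 * a ^ 5 * b ^ 2 * d ^ 4 * t + 64000000 * a ^ 5 * b * c ^ 5 -
        4915200 * a ^ 5 * b * c ^ 4 * d * t + 320000000 * a ^ 5 * b * c ^ 4 * d - 25600000 * a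
        ^ 5 * b * c ^ 3 * d ^ 2 * t + 400000000 * a ^ 5 * b * c ^ 3 * d ^ 2 - 32000000 * a ^ 5
        * b * c ^ 2 * d ^ 3 * t + 3200000 * a ^ 5 * b * c * d ^ 4 * t - 819200 * a ^ 5 * c ^ 6
        * t - 10240000 * a ^ 5 * c ^ 5 * d * t - 38400000 * a ^ 5 * c ^ 4 * d ^ 2 * t -
        51200000 * a ^ 5 * c ^ 3 * d ^ 3 * t - 16000000 * a ^ 5 * c ^ 2 * d ^ 4 * t + 307200000
        * a ^ 4 * b ^ 5 * c * d + 640000000 * a ^ 4 * b ^ 5 * d ^ 2 + 153600000 * a ^ 4 * b ^ 4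
        * c ^ 3 + 1216000000 * a ^ 4 * b ^ 4 * c ^ 2 * d + 6553600 * a ^ 4 * b ^ 4 * c * d ^ 2
        * t + 800000000 * a ^ 4 * b ^ 4 * c * d ^ 2 + 90112000 * a ^ 4 * b ^ 4 * d ^ 3 * t +
        400000000 * a ^ 4 * b ^ 4 * d ^ 3 + 256000000 * a ^ 4 * b ^ 3 * c ^ 4 + 6553600 * a ^ 4
        * b ^ 3 * c ^ 3 * d * t + 800000000 * a ^ 4 * b ^ 3 * c ^ 3 * d + 155648000 * a ^ 4 * b
        ^ 3 * c ^ 2 * d ^ 2 * t + 1200000000 * a ^ 4 * b ^ 3 * c ^ 2 * d ^ 2 + 266240000 * a ^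
        4 * b ^ 3 * c * d ^ 3 * t + 2000000000 * a ^ 4 * b ^ 3 * c * d ^ 3 - 25600000 * a ^ 4 *
        b ^ 3 * d ^ 4 * t + 1638400 * a ^ 4 * b ^ 2 * c ^ 5 * t - 320000000 * a ^ 4 * b ^ 2 * c
        ^ 5 + 79872000 * a ^ 4 * b ^ 2 * c ^ 4 * d * t - 1600000000 * a ^ 4 * b ^ 2 * c ^ 4 * d
        + 399360000 * a ^ 4 * b ^ 2 * c ^ 3 * d ^ 2 * t - 2000000000 * a ^ 4 * b ^ 2 * c ^ 3 *
        d ^ 2 + 614400000 * a ^ 4 * b ^ 2 * c ^ 2 * d ^ 3 * t - 6553600 * a ^ 4 * b ^ 2 * c * d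
        ^ 4 * t ^ 2 + 224000000 * a ^ 4 * b ^ 2 * c * d ^ 4 * t - 4915200 * a ^ 4 * b ^ 2 * d ^
        5 * t ^ 2 + 12288000 * a ^ 4 * b * c ^ 6 * t + 107520000 * a ^ 4 * b * c ^ 5 * d * t +
        358400000 * a ^ 4 * b * c ^ 4 * d ^ 2 * t - 6553600 * a ^ 4 * b * c ^ 3 * d ^ 3 * t ^ 2
        + 544000000 * a ^ 4 * b * c ^ 3 * d ^ 3 * t - 21299200 * a ^ 4 * b * c ^ 2 * d ^ 4 * t
        ^ 2 + 320000000 * a ^ 4 * b * c ^ 2 * d ^ 4 * t - 12288000 * a ^ 4 * b * c * d ^ 5 * t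
        ^ 2 - 10240000 * a ^ 4 * c ^ 7 * t - 76800000 * a ^ 4 * c ^ 6 * d * t - 1638400 * a ^ 4
        * c ^ 5 * d ^ 2 * t ^ 2 - 192000000 * a ^ 4 * c ^ 5 * d ^ 2 * t - 9420800 * a ^ 4 * c ^
        4 * d ^ 3 * t ^ 2 - 160000000 * a ^ 4 * c ^ 4 * d ^ 3 * t - 16384000 * a ^ 4 * c ^ 3 *
        d ^ 4 * t ^ 2 - 7680000 * a ^ 4 * c ^ 2 * d ^ 5 * t ^ 2 - 1024000000 * a ^ 3 * b ^ 6 *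
        c * d - 1280000000 * a ^ 3 * b ^ 6 * d ^ 2 - 512000000 * a ^ 3 * b ^ 5 * c ^ 3 -
        3200000000 * a ^ 3 * b ^ 5 * c ^ 2 * d - 131072000 * a ^ 3 * b ^ 5 * c * d ^ 2 * t -
        1600000000 * a ^ 3 * b ^ 5 * c * d ^ 2 - 327680000 * a ^ 3 * b ^ 5 * d ^ 3 * t -
        640000000 * a ^ 3 * b ^ 4 * c ^ 4 - 131072000 * a ^ 3 * b ^ 4 * c ^ 3 * d * t -
        1600000000 * a ^ 3 * b ^ 4 * c ^ 3 * d - 901120000 * a ^ 3 * b ^ 4 * c ^ 2 * d ^ 2 * t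
        - 819200000 * a ^ 3 * b ^ 4 * c * d ^ 3 * t - 41943040 * a ^ 3 * b ^ 4 * d ^ 4 * t ^ 2
        - 256000000 * a ^ 3 * b ^ 4 * d ^ 4 * t - 32768000 * a ^ 3 * b ^ 3 * c ^ 5 * t -
        491520000 * a ^ 3 * b ^ 3 * c ^ 4 * d * t - 1331200000 * a ^ 3 * b ^ 3 * c ^ 3 * d ^ 2
        * t - 83886080 * a ^ 3 * b ^ 3 * c ^ 2 * d ^ 3 * t ^ 2 - 1408000000 * a ^ 3 * b ^ 3 * c
        ^ 2 * d ^ 3 * t - 183500800 * a ^ 3 * b ^ 3 * c * d ^ 4 * t ^ 2 - 1600000000 * a ^ 3 *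
        b ^ 3 * c * d ^ 4 * t + 32768000 * a ^ 3 * b ^ 3 * d ^ 5 * t ^ 2 - 61440000 * a ^ 3 * b
        ^ 2 * c ^ 6 * t - 153600000 * a ^ 3 * b ^ 2 * c ^ 5 * d * t - 62914560 * a ^ 3 * b ^ 2
        * c ^ 4 * d ^ 2 * t ^ 2 + 128000000 * a ^ 3 * b ^ 2 * c ^ 4 * d ^ 2 * t - 340787200 * a
        ^ 3 * b ^ 2 * c ^ 3 * d ^ 3 * t ^ 2 - 320000000 * a ^ 3 * b ^ 2 * c ^ 3 * d ^ 3 * t -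
        458752000 * a ^ 3 * b ^ 2 * c ^ 2 * d ^ 4 * t ^ 2 - 1600000000 * a ^ 3 * b ^ 2 * c ^ 2
        * d ^ 4 * t + 102400000 * a ^ 3 * b * c ^ 7 * t - 20971520 * a ^ 3 * b * c ^ 6 * d * t
        ^ 2 + 768000000 * a ^ 3 * b * c ^ 6 * d * t - 203161600 * a ^ 3 * b * c ^ 5 * d ^ 2 * t
        ^ 2 + 1920000000 * a ^ 3 * b * c ^ 5 * d ^ 2 * t - 647168000 * a ^ 3 * b * c ^ 4 * d ^
        3 * t ^ 2 + 1600000000 * a ^ 3 * b * c ^ 4 * d ^ 3 * t - 737280000 * a ^ 3 * b * c ^ 3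
        * d ^ 4 * t ^ 2 - 153600000 * a ^ 3 * b * c ^ 2 * d ^ 5 * t ^ 2 - 2621440 * a ^ 3 * c ^
        8 * t ^ 2 - 39321600 * a ^ 3 * c ^ 7 * d * t ^ 2 - 204800000 * a ^ 3 * c ^ 6 * d ^ 2 *
        t ^ 2 - 471040000 * a ^ 3 * c ^ 5 * d ^ 3 * t ^ 2 - 460800000 * a ^ 3 * c ^ 4 * d ^ 4 *
        t ^ 2 - 128000000 * a ^ 3 * c ^ 3 * d ^ 5 * t ^ 2 + 655360000 * a ^ 2 * b ^ 6 * c * d ^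
        2 * t + 819200000 * a ^ 2 * b ^ 6 * d ^ 3 * t + 655360000 * a ^ 2 * b ^ 5 * c ^ 3 * d *
        t + 3276800000 * a ^ 2 * b ^ 5 * c ^ 2 * d ^ 2 * t + 41943040 * a ^ 2 * b ^ 5 * c * d ^
        3 * t ^ 2 + 2048000000 * a ^ 2 * b ^ 5 * c * d ^ 3 * t + 157286400 * a ^ 2 * b ^ 5 * d
        ^ 4 * t ^ 2 + 163840000 * a ^ 2 * b ^ 4 * c ^ 5 * t + 1843200000 * a ^ 2 * b ^ 4 * c ^
        4 * d * t + 62914560 * a ^ 2 * b ^ 4 * c ^ 3 * d ^ 2 * t ^ 2 + 4096000000 * a ^ 2 * b ^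
        4 * c ^ 3 * d ^ 2 * t + 498073600 * a ^ 2 * b ^ 4 * c ^ 2 * d ^ 3 * t ^ 2 + 1280000000
        * a ^ 2 * b ^ 4 * c ^ 2 * d ^ 3 * t + 589824000 * a ^ 2 * b ^ 4 * c * d ^ 4 * t ^ 2 +
        163840000 * a ^ 2 * b ^ 4 * d ^ 5 * t ^ 2 + 204800000 * a ^ 2 * b ^ 3 * c ^ 6 * t +
        31457280 * a ^ 2 * b ^ 3 * c ^ 5 * d * t ^ 2 + 1024000000 * a ^ 2 * b ^ 3 * c ^ 5 * d *
        t + 432537600 * a ^ 2 * b ^ 3 * c ^ 4 * d ^ 2 * t ^ 2 + 1280000000 * a ^ 2 * b ^ 3 * c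
        ^ 4 * d ^ 2 * t + 1245184000 * a ^ 2 * b ^ 3 * c ^ 3 * d ^ 3 * t ^ 2 + 1392640000 * a ^
        2 * b ^ 3 * c ^ 2 * d ^ 4 * t ^ 2 - 41943040 * a ^ 2 * b ^ 3 * c * d ^ 5 * t ^ 3 +
        1228800000 * a ^ 2 * b ^ 3 * c * d ^ 5 * t ^ 2 - 31457280 * a ^ 2 * b ^ 3 * d ^ 6 * t ^
        3 + 5242880 * a ^ 2 * b ^ 2 * c ^ 7 * t ^ 2 + 137625600 * a ^ 2 * b ^ 2 * c ^ 6 * d * t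
        ^ 2 + 573440000 * a ^ 2 * b ^ 2 * c ^ 5 * d ^ 2 * t ^ 2 + 983040000 * a ^ 2 * b ^ 2 * c
        ^ 4 * d ^ 3 * t ^ 2 - 62914560 * a ^ 2 * b ^ 2 * c ^ 3 * d ^ 4 * t ^ 3 + 1740800000 * a
        ^ 2 * b ^ 2 * c ^ 3 * d ^ 4 * t ^ 2 - 204472320 * a ^ 2 * b ^ 2 * c ^ 2 * d ^ 5 * t ^ 3
        + 2304000000 * a ^ 2 * b ^ 2 * c ^ 2 * d ^ 5 * t ^ 2 - 117964800 * a ^ 2 * b ^ 2 * c *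
        d ^ 6 * t ^ 3 + 13107200 * a ^ 2 * b * c ^ 8 * t ^ 2 - 16384000 * a ^ 2 * b * c ^ 7 * d
        * t ^ 2 - 532480000 * a ^ 2 * b * c ^ 6 * d ^ 2 * t ^ 2 - 31457280 * a ^ 2 * b * c ^ 5
        * d ^ 3 * t ^ 3 - 1331200000 * a ^ 2 * b * c ^ 5 * d ^ 3 * t ^ 2 - 180879360 * a ^ 2 *
        b * c ^ 4 * d ^ 4 * t ^ 3 - 256000000 * a ^ 2 * b * c ^ 4 * d ^ 4 * t ^ 2 - 314572800 *
        a ^ 2 * b * c ^ 3 * d ^ 5 * t ^ 3 + 1280000000 * a ^ 2 * b * c ^ 3 * d ^ 5 * t ^ 2 -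
        147456000 * a ^ 2 * b * c ^ 2 * d ^ 6 * t ^ 3 - 32768000 * a ^ 2 * c ^ 9 * t ^ 2 -
        327680000 * a ^ 2 * c ^ 8 * d * t ^ 2 - 5242880 * a ^ 2 * c ^ 7 * d ^ 2 * t ^ 3 -
        1228800000 * a ^ 2 * c ^ 7 * d ^ 2 * t ^ 2 - 43253760 * a ^ 2 * c ^ 6 * d ^ 3 * t ^ 3 -
        2048000000 * a ^ 2 * c ^ 6 * d ^ 3 * t ^ 2 - 127795200 * a ^ 2 * c ^ 5 * d ^ 4 * t ^ 3
        - 1280000000 * a ^ 2 * c ^ 5 * d ^ 4 * t ^ 2 - 155648000 * a ^ 2 * c ^ 4 * d ^ 5 * t ^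
        3 - 61440000 * a ^ 2 * c ^ 3 * d ^ 6 * t ^ 3 - 419430400 * a * b ^ 6 * c * d ^ 3 * t ^
        2 - 524288000 * a * b ^ 6 * d ^ 4 * t ^ 2 - 629145600 * a * b ^ 5 * c ^ 3 * d ^ 2 * t ^
        2 - 2883584000 * a * b ^ 5 * c ^ 2 * d ^ 3 * t ^ 2 - 1966080000 * a * b ^ 5 * c * d ^ 4
        * t ^ 2 - 134217728 * a * b ^ 5 * d ^ 5 * t ^ 3 - 314572800 * a * b ^ 4 * c ^ 5 * d * t
        ^ 2 - 2752512000 * a * b ^ 4 * c ^ 4 * d ^ 2 * t ^ 2 - 5898240000 * a * b ^ 4 * c ^ 3 *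
        d ^ 3 * t ^ 2 - 335544320 * a * b ^ 4 * c ^ 2 * d ^ 4 * t ^ 3 - 2457600000 * a * b ^ 4
        * c ^ 2 * d ^ 4 * t ^ 2 - 1090519040 * a * b ^ 4 * c * d ^ 5 * t ^ 3 - 104857600 * a *
        b ^ 4 * d ^ 6 * t ^ 3 - 52428800 * a * b ^ 3 * c ^ 7 * t ^ 2 - 851968000 * a * b ^ 3 *
        c ^ 6 * d * t ^ 2 - 3440640000 * a * b ^ 3 * c ^ 5 * d ^ 2 * t ^ 2 - 335544320 * a * b
        ^ 3 * c ^ 4 * d ^ 3 * t ^ 3 - 4505600000 * a * b ^ 3 * c ^ 4 * d ^ 3 * t ^ 2 -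
        2390753280 * a * b ^ 3 * c ^ 3 * d ^ 4 * t ^ 3 - 1024000000 * a * b ^ 3 * c ^ 3 * d ^ 4
        * t ^ 2 - 4246732800 * a * b ^ 3 * c ^ 2 * d ^ 5 * t ^ 3 - 917504000 * a * b ^ 3 * c *
        d ^ 6 * t ^ 3 - 65536000 * a * b ^ 2 * c ^ 8 * t ^ 2 - 491520000 * a * b ^ 2 * c ^ 7 *
        d * t ^ 2 - 167772160 * a * b ^ 2 * c ^ 6 * d ^ 2 * t ^ 3 - 1228800000 * a * b ^ 2 * c
        ^ 6 * d ^ 2 * t ^ 2 - 1950351360 * a * b ^ 2 * c ^ 5 * d ^ 3 * t ^ 3 - 1024000000 * a *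
        b ^ 2 * c ^ 5 * d ^ 3 * t ^ 2 - 6999244800 * a * b ^ 2 * c ^ 4 * d ^ 4 * t ^ 3 -
        8912896000 * a * b ^ 2 * c ^ 3 * d ^ 5 * t ^ 3 - 2457600000 * a * b ^ 2 * c ^ 2 * d ^ 6
        * t ^ 3 - 41943040 * a * b * c ^ 8 * d * t ^ 3 - 702545920 * a * b * c ^ 7 * d ^ 2 * t
        ^ 3 - 3866624000 * a * b * c ^ 6 * d ^ 3 * t ^ 3 - 9207808000 * a * b * c ^ 5 * d ^ 4 *
        t ^ 3 - 9256960000 * a * b * c ^ 4 * d ^ 5 * t ^ 3 - 2662400000 * a * b * c ^ 3 * d ^ 6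
        * t ^ 3 - 4194304 * a * c ^ 10 * t ^ 3 - 94371840 * a * c ^ 9 * d * t ^ 3 - 707788800 *
        a * c ^ 8 * d ^ 2 * t ^ 3 - 2490368000 * a * c ^ 7 * d ^ 3 * t ^ 3 - 4423680000 * a * c
        ^ 6 * d ^ 4 * t ^ 3 - 3686400000 * a * c ^ 5 * d ^ 5 * t ^ 3 - 1024000000 * a * c ^ 4 *
        d ^ 6 * t ^ 3 + 268435456 * b ^ 6 * c * d ^ 4 * t ^ 3 + 335544320 * b ^ 6 * d ^ 5 * t ^
        3 + 536870912 * b ^ 5 * c ^ 3 * d ^ 3 * t ^ 3 + 2348810240 * b ^ 5 * c ^ 2 * d ^ 4 * t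
        ^ 3 + 1677721600 * b ^ 5 * c * d ^ 5 * t ^ 3 + 402653184 * b ^ 4 * c ^ 5 * d ^ 2 * t ^
        3 + 3187671040 * b ^ 4 * c ^ 4 * d ^ 3 * t ^ 3 + 6710886400 * b ^ 4 * c ^ 3 * d ^ 4 * t
        ^ 3 + 3145728000 * b ^ 4 * c ^ 2 * d ^ 5 * t ^ 3 - 268435456 * b ^ 4 * c * d ^ 6 * t ^
        4 - 201326592 * b ^ 4 * d ^ 7 * t ^ 4 + 134217728 * b ^ 3 * c ^ 7 * d * t ^ 3 +
        1677721600 * b ^ 3 * c ^ 6 * d ^ 2 * t ^ 3 + 6291456000 * b ^ 3 * c ^ 5 * d ^ 3 * t ^ 3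
        + 8388608000 * b ^ 3 * c ^ 4 * d ^ 4 * t ^ 3 - 536870912 * b ^ 3 * c ^ 3 * d ^ 5 * t ^
        4 + 2621440000 * b ^ 3 * c ^ 3 * d ^ 5 * t ^ 3 - 1744830464 * b ^ 3 * c ^ 2 * d ^ 6 * t
        ^ 4 - 1006632960 * b ^ 3 * c * d ^ 7 * t ^ 4 + 16777216 * b ^ 2 * c ^ 9 * t ^ 3 +
        356515840 * b ^ 2 * c ^ 8 * d * t ^ 3 + 2097152000 * b ^ 2 * c ^ 7 * d ^ 2 * t ^ 3 +
        4980736000 * b ^ 2 * c ^ 6 * d ^ 3 * t ^ 3 - 402653184 * b ^ 2 * c ^ 5 * d ^ 4 * t ^ 4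
        + 4587520000 * b ^ 2 * c ^ 5 * d ^ 4 * t ^ 3 - 2315255808 * b ^ 2 * c ^ 4 * d ^ 5 * t ^
        4 + 819200000 * b ^ 2 * c ^ 4 * d ^ 5 * t ^ 3 - 4026531840 * b ^ 2 * c ^ 3 * d ^ 6 * t
        ^ 4 - 1887436800 * b ^ 2 * c ^ 2 * d ^ 7 * t ^ 4 + 20971520 * b * c ^ 10 * t ^ 3 +
        209715200 * b * c ^ 9 * d * t ^ 3 + 786432000 * b * c ^ 8 * d ^ 2 * t ^ 3 - 134217728 *
        b * c ^ 7 * d ^ 3 * t ^ 4 + 1310720000 * b * c ^ 7 * d ^ 3 * t ^ 3 - 1107296256 * b * c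
        ^ 6 * d ^ 4 * t ^ 4 + 819200000 * b * c ^ 6 * d ^ 4 * t ^ 3 - 3271557120 * b * c ^ 5 *
        d ^ 5 * t ^ 4 - 3984588800 * b * c ^ 4 * d ^ 6 * t ^ 4 - 1572864000 * b * c ^ 3 * d ^ 7
        * t ^ 4 - 16777216 * c ^ 9 * d ^ 2 * t ^ 4 - 180355072 * c ^ 8 * d ^ 3 * t ^ 4 -
        754974720 * c ^ 7 * d ^ 4 * t ^ 4 - 1520435200 * c ^ 6 * d ^ 5 * t ^ 4 - 1441792000 * c
        ^ 5 * d ^ 6 * t ^ 4 - 491520000 * c ^ 4 * d ^ 7 * t ^ 4) * hMt +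
      (-40000 * a ^ 7 + 1200000 * a ^ 6 * b - 12000000 * a ^ 5 * b ^ 2 + 40000000 * a ^ 4 * b ^
        3) * hXX
  have h2 : (-10 * a ^ 3 + 24 * a ^ 2 * t * e - 12 * a * b * d * t - 15 * a * b * t * e - 6 * a * c ^ 2 * t - 15 * a * c * d * t - 18 * a * t ^ 2 * e ^ 2 + 4 * b ^ 2 * c * t + 5 * b ^ 2 * d * t + 5 * b * c ^ 2 * t + 8 * b * d * t ^ 2 * e + 11 * b * t ^ 2 * e ^ 2 + 4 * c ^ 2 * t ^ 2 * e - 4 * c * d ^ 2 * t ^ 2 + 2 * c * d * t ^ 2 * e - 5 * c * t ^ 2 * e ^ 2 - 3 * d ^ 3 * t ^ 2 - 5 * d ^ 2 * t ^ 2 * e + 4 * t ^ 3 * e ^ 3) = 0 :=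
    (mul_eq_zero.mp hbig2).resolve_left
      (mul_ne_zero (pow_ne_zero _ h4t) (pow_ne_zero _ hM))
  have hp4 := congrArg (Polynomial.C : ℚ →+* ℚ[X]) h4
  simp only [map_add, map_sub, map_mul, map_pow, map_ofNat, map_one, map_zero, Polynomial.C_neg] at hp4
  have hp3 := congrArg (Polynomial.C : ℚ →+* ℚ[X]) h3
  simp only [map_add, map_sub, map_mul, map_pow, map_ofNat, map_one, map_zero, Polynomial.C_neg] at hp3
  have hp2 := congrArg (Polynomial.C : ℚ →+* ℚ[X]) h2
  simp only [map_add, map_sub, map_mul, map_pow, map_ofNat, map_one, map_zero, Polynomial.C_neg] at hp2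
  -- minimal polynomial
  have hmonic : (X ^ 5 + C t * X + C t : ℚ[X]).Monic := by
    have hd : ((C t * X + C t : ℚ[X])).degree < 5 := by
      apply lt_of_le_of_lt (degree_add_le _ _) ?_
      rw [max_lt_iff]
      refine ⟨lt_of_le_of_lt (degree_mul_le _ _) ?_, lt_of_le_of_lt degree_C_le (by norm_num)⟩
      calc (C t).degree + (X : ℚ[X]).degree ≤ 0 + 1 := add_le_add degree_C_le degree_X_le
        _ < 5 := by norm_num
    have h := monic_X_pow_add (n := 5) (by exact_mod_cast hd)
    rwa [← add_assoc] at h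
  have hmin : minpoly ℚ α = X ^ 5 + C t * X + C t :=
    (minpoly.eq_of_irreducible_of_monic hirr hα hmonic).symm
  have hint : IsIntegral ℚ α := Algebra.IsIntegral.isIntegral α
  have hdeg : (minpoly ℚ α).natDegree = 5 := by rw [hmin]; compute_degree!
  let pb : PowerBasis ℚ K := (Algebra.adjoin.powerBasis hint).map
    ((Subalgebra.equivOfEq _ _ hgen).trans Subalgebra.topEquiv)
  have hpbgen : pb.gen = α := rfl
  have hpbdim : pb.dim = 5 := hdeg
  let B : Module.Basis (Fin 5) ℚ K := pb.basis.reindex (finCongr hpbdim)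
  have hB : ∀ i : Fin 5, B i = α ^ (i : ℕ) := by
    intro i
    simp [B, Module.Basis.reindex_apply, PowerBasis.coe_basis, hpbgen]
  have hα' : α ^ 5 + algebraMap ℚ K t * α + algebraMap ℚ K t = 0 := by
    have h := hα
    simp only [map_add, map_mul, map_pow, aeval_X, aeval_C] at h
    exact h
  -- the multiplication matrix
  have hml : LinearMap.mulLeft ℚ β = Matrix.toLin B B
      !![a, -(t*e), -(t*d), -(t*c), -(t*b);
         b, a - t*e, -(t*(d+e)), -(t*(c+d)), -(t*(b+c));
         c, b, a - t*e, -(t*(d+e)), -(t*(c+d));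
         d, c, b, a - t*e, -(t*(d+e));
         e, d, c, b, a - t*e] := by
    apply B.ext
    intro i
    rw [Matrix.toLin_self]
    fin_cases i <;>
      simp only [hB, Fin.sum_univ_five, LinearMap.mulLeft_apply, hβ, Algebra.smul_def,
        Matrix.cons_val_zero, Matrix.cons_val_one, Matrix.cons_val_two, Matrix.cons_val_three,
        Matrix.cons_val_four, Matrix.head_cons, Matrix.vecTail, Matrix.vecHead, Matrix.of_apply,
        Function.comp, Fin.isValue, map_add, map_mul, map_sub, map_neg, map_one, map_zero,
        pow_zero, pow_one, show ((0 : Fin 5) : ℕ) = 0 from rfl, show ((1 : Fin 5) : ℕ) = 1 from rfl,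
        show ((2 : Fin 5) : ℕ) = 2 from rfl, show ((3 : Fin 5) : ℕ) = 3 from rfl,
        show ((4 : Fin 5) : ℕ) = 4 from rfl, fin5_mk0, fin5_mk1, fin5_mk2, fin5_mk3, fin5_mk4,
        Matrix.cons_val_succ, Fin.succ_zero_eq_one]
    · ring
    · linear_combination (algebraMap ℚ K e) * hα'
    · linear_combination (algebraMap ℚ K d + algebraMap ℚ K e * α) * hα'
    · linear_combination (algebraMap ℚ K c + algebraMap ℚ K d * α
        + algebraMap ℚ K e * α ^ 2) * hα'
    · linear_combination (algebraMap ℚ K b + algebraMap ℚ K c * α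
        + algebraMap ℚ K d * α ^ 2 + algebraMap ℚ K e * α ^ 3) * hα'
  refine ⟨(5 * a ^ 4 - 16 * a ^ 3 * t * e + 12 * a ^ 2 * b * d * t + 15 * a ^ 2 * b * t * e + 6 * a ^
      2 * c ^ 2 * t + 15 * a ^ 2 * c * d * t + 18 * a ^ 2 * t ^ 2 * e ^ 2 - 8 * a * b ^ 2 * c *
      t - 10 * a * b ^ 2 * d * t - 10 * a * b * c ^ 2 * t - 16 * a * b * d * t ^ 2 * e - 22 * a
      * b * t ^ 2 * e ^ 2 - 8 * a * c ^ 2 * t ^ 2 * e + 8 * a * c * d ^ 2 * t ^ 2 - 4 * a * c *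
      d * t ^ 2 * e + 10 * a * c * t ^ 2 * e ^ 2 + 6 * a * d ^ 3 * t ^ 2 + 10 * a * d ^ 2 * t ^
      2 * e - 8 * a * t ^ 3 * e ^ 3 + 1 * b ^ 4 * t + 5 * b ^ 3 * c * t + 4 * b ^ 2 * c * t ^ 2
      * e + 2 * b ^ 2 * d ^ 2 * t ^ 2 + 13 * b ^ 2 * d * t ^ 2 * e + 5 * b ^ 2 * t ^ 2 * e ^ 2
      - 4 * b * c ^ 2 * d * t ^ 2 + 3 * b * c ^ 2 * t ^ 2 * e - 7 * b * c * d ^ 2 * t ^ 2 - 5 *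
      b * c * d * t ^ 2 * e - 5 * b * d ^ 3 * t ^ 2 + 4 * b * d * t ^ 3 * e ^ 2 + 7 * b * t ^ 3
      * e ^ 3 + 1 * c ^ 4 * t ^ 2 + 1 * c ^ 3 * d * t ^ 2 - 5 * c ^ 3 * t ^ 2 * e + 5 * c ^ 2 *
      d ^ 2 * t ^ 2 + 2 * c ^ 2 * t ^ 3 * e ^ 2 - 4 * c * d ^ 2 * t ^ 3 * e - 3 * c * d * t ^ 3
      * e ^ 2 - 6 * c * t ^ 3 * e ^ 3 + 1 * d ^ 4 * t ^ 3 + 1 * d ^ 3 * t ^ 3 * e + 1 * d ^ 2 *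
      t ^ 3 * e ^ 2 + 5 * d * t ^ 3 * e ^ 3 + 1 * t ^ 4 * e ^ 4),
    (-1 * a ^ 5 + 4 * a ^ 4 * t * e - 4 * a ^ 3 * b * d * t - 5 * a ^ 3 * b * t * e - 2 * a ^ 3
      * c ^ 2 * t - 5 * a ^ 3 * c * d * t - 6 * a ^ 3 * t ^ 2 * e ^ 2 + 4 * a ^ 2 * b ^ 2 * c *
      t + 5 * a ^ 2 * b ^ 2 * d * t + 5 * a ^ 2 * b * c ^ 2 * t + 8 * a ^ 2 * b * d * t ^ 2 * e
      + 11 * a ^ 2 * b * t ^ 2 * e ^ 2 + 4 * a ^ 2 * c ^ 2 * t ^ 2 * e - 4 * a ^ 2 * c * d ^ 2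
      * t ^ 2 + 2 * a ^ 2 * c * d * t ^ 2 * e - 5 * a ^ 2 * c * t ^ 2 * e ^ 2 - 3 * a ^ 2 * d ^
      3 * t ^ 2 - 5 * a ^ 2 * d ^ 2 * t ^ 2 * e + 4 * a ^ 2 * t ^ 3 * e ^ 3 - 1 * a * b ^ 4 * t
      - 5 * a * b ^ 3 * c * t - 4 * a * b ^ 2 * c * t ^ 2 * e - 2 * a * b ^ 2 * d ^ 2 * t ^ 2 -
      13 * a * b ^ 2 * d * t ^ 2 * e - 5 * a * b ^ 2 * t ^ 2 * e ^ 2 + 4 * a * b * c ^ 2 * d *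
      t ^ 2 - 3 * a * b * c ^ 2 * t ^ 2 * e + 7 * a * b * c * d ^ 2 * t ^ 2 + 5 * a * b * c * d
      * t ^ 2 * e + 5 * a * b * d ^ 3 * t ^ 2 - 4 * a * b * d * t ^ 3 * e ^ 2 - 7 * a * b * t ^
      3 * e ^ 3 - 1 * a * c ^ 4 * t ^ 2 - 1 * a * c ^ 3 * d * t ^ 2 + 5 * a * c ^ 3 * t ^ 2 * e
      - 5 * a * c ^ 2 * d ^ 2 * t ^ 2 - 2 * a * c ^ 2 * t ^ 3 * e ^ 2 + 4 * a * c * d ^ 2 * t ^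
      3 * e + 3 * a * c * d * t ^ 3 * e ^ 2 + 6 * a * c * t ^ 3 * e ^ 3 - 1 * a * d ^ 4 * t ^ 3
      - 1 * a * d ^ 3 * t ^ 3 * e - 1 * a * d ^ 2 * t ^ 3 * e ^ 2 - 5 * a * d * t ^ 3 * e ^ 3 -
      1 * a * t ^ 4 * e ^ 4 + 1 * b ^ 5 * t + 4 * b ^ 3 * c * t ^ 2 * e + 2 * b ^ 3 * d ^ 2 * t
      ^ 2 + 5 * b ^ 3 * d * t ^ 2 * e - 4 * b ^ 2 * c ^ 2 * d * t ^ 2 - 5 * b ^ 2 * c ^ 2 * t ^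
      2 * e - 5 * b ^ 2 * c * d ^ 2 * t ^ 2 + 4 * b ^ 2 * d * t ^ 3 * e ^ 2 + 3 * b ^ 2 * t ^ 3
      * e ^ 3 + 1 * b * c ^ 4 * t ^ 2 + 5 * b * c ^ 3 * d * t ^ 2 + 2 * b * c ^ 2 * t ^ 3 * e ^
      2 - 4 * b * c * d ^ 2 * t ^ 3 * e - 7 * b * c * d * t ^ 3 * e ^ 2 - 5 * b * c * t ^ 3 * e
      ^ 3 + 1 * b * d ^ 4 * t ^ 3 + 1 * b * d ^ 3 * t ^ 3 * e + 5 * b * d ^ 2 * t ^ 3 * e ^ 2 +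
      1 * b * t ^ 4 * e ^ 4 - 1 * c ^ 5 * t ^ 2 - 2 * c ^ 3 * t ^ 3 * e ^ 2 + 4 * c ^ 2 * d ^ 2
      * t ^ 3 * e + 5 * c ^ 2 * d * t ^ 3 * e ^ 2 - 1 * c * d ^ 4 * t ^ 3 - 5 * c * d ^ 3 * t ^
      3 * e - 1 * c * t ^ 4 * e ^ 4 + 1 * d ^ 5 * t ^ 3 + 1 * d * t ^ 4 * e ^ 4 - 1 * t ^ 4 * e
      ^ 5), ?_⟩
  rw [← LinearMap.charpoly_toMatrix (LinearMap.mulLeft ℚ β) B, hml,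
    LinearMap.toMatrix_toLin, Matrix.charpoly, det_fin_five]
  simp only [Matrix.charmatrix_apply, Matrix.diagonal_apply, Matrix.of_apply, Matrix.cons_val,
    Fin.isValue, map_add, map_sub, map_mul, map_pow, map_ofNat, map_one, map_zero, Polynomial.C_neg, map_neg,
    Fin.ext_iff, show ((0 : Fin 5) : ℕ) = 0 from rfl, show ((1 : Fin 5) : ℕ) = 1 from rfl,
    show ((2 : Fin 5) : ℕ) = 2 from rfl, show ((3 : Fin 5) : ℕ) = 3 from rfl,
    show ((4 : Fin 5) : ℕ) = 4 from rfl]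
  norm_num
  set_option maxRecDepth 100000 in
  linear_combination (X : ℚ[X]) ^ 4 * hp4 + (X : ℚ[X]) ^ 3 * hp3 + (X : ℚ[X]) ^ 2 * hp2
end
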